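/- arXiv:1711.09371 — 10 statements merged into one kernel-verified Lean document; each statement's English description precedes it below -/
import Mathlib

section
/- Let G be a group, φ an automorphism of G, and H a normal subgroup of G with φ(H) = H; let φ̄ be the induced automorphism of G/H and let C(φ̄) = {x ∈ G/H : φ̄(x) = x} be its fixed-point subgroup. Then R(φ|_H) ≤ R(φ) · |C(φ̄)| (as an inequality of cardinal numbers; in particular, if R(φ) is finite and C(φ̄) is finite, then R(φ|_H) is finite). -/
/-- Twisted conjugacy relation for an automorphism `φ` of `G`:
`x ∼ y` iff `y = h * x * φ(h)⁻¹` for some `h`. -/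
def twistedConj {G : Type*} [Group G] (φ : G ≃* G) (x y : G) : Prop :=
  ∃ h : G, y = h * x * (φ h)⁻¹

/-- The set of Reidemeister (twisted conjugacy) classes of `φ`.
Its cardinality is the Reidemeister number `R(φ)`. -/
def ReidemeisterClasses {G : Type*} [Group G] (φ : G ≃* G) := Quot (twistedConj φ)

set_option linter.unusedVariables false in
lemma twistedConj_equivalence {G : Type*} [Group G] (φ : G ≃* G) :
    Equivalence (twistedConj φ) where
  refl x := ⟨1, by simp⟩
  symm := by rintro x y ⟨h, rfl⟩; exact ⟨h⁻¹, by simp [mul_assoc]⟩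
  trans := by
    rintro x y z ⟨h, rfl⟩ ⟨k, rfl⟩
    exact ⟨k * h, by simp [mul_assoc]⟩

/-- If `H` is a `φ`-invariant normal subgroup of `G` and `ψ` is the induced automorphism of
`G ⧸ H` with fixed-point subgroup `C(ψ)`, then `R(φ|_H) ≤ R(φ) · |C(ψ)|` as cardinals. -/
theorem stmt1 {G : Type*} [Group G] (φ : G ≃* G) (H : Subgroup G) [H.Normal]
    (hH : ∀ x : G, x ∈ H ↔ φ x ∈ H)
    (ψ : (G ⧸ H) ≃* (G ⧸ H))
    (hψ : ∀ g : G, ψ (QuotientGroup.mk g) = QuotientGroup.mk (φ g)) :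
    Cardinal.mk (Quot (fun h₁ h₂ : H => ∃ h : H, (h₂ : G) = ↑h * ↑h₁ * (φ ↑h)⁻¹))
      ≤ Cardinal.mk (ReidemeisterClasses φ) * Cardinal.mk {x : G ⧸ H // ψ x = x} := by
  classical
  set r : H → H → Prop := fun h₁ h₂ => ∃ h : H, (h₂ : G) = ↑h * ↑h₁ * (φ ↑h)⁻¹ with hr
  have hequiv := twistedConj_equivalence φ
  -- map to G-classes
  let f : Quot r → ReidemeisterClasses φ :=
    Quot.lift (fun h : H => Quot.mk (twistedConj φ) (h : G))
      (fun h₁ h₂ hk => Quot.sound ⟨(hk.choose : G), hk.choose_spec⟩)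
  have hf : ∀ h : H, f (Quot.mk r h) = Quot.mk (twistedConj φ) (h : G) := fun _ => rfl
  -- representatives
  choose repH hrep using fun a : Quot r => Quot.exists_rep a
  -- base points per G-class
  let base : ReidemeisterClasses φ → H := fun b =>
    if hb : ∃ h : H, Quot.mk (twistedConj φ) (h : G) = b then hb.choose else 1
  have hbase : ∀ a : Quot r,
      Quot.mk (twistedConj φ) ((base (f a) : H) : G) = f a := by
    intro a
    have hb : ∃ h : H, Quot.mk (twistedConj φ) (h : G) = f a :=
      ⟨repH a, by conv_rhs => rw [← hrep a]⟩
    simp only [base, dif_pos hb]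
    exact hb.choose_spec
  -- conjugating elements
  have hrel : ∀ a : Quot r, ∃ g : G,
      ((repH a : H) : G) = g * (base (f a) : G) * (φ g)⁻¹ := by
    intro a
    have h1 : Quot.mk (twistedConj φ) ((repH a : H) : G) = f a := by
      conv_rhs => rw [← hrep a]
    have h2 := hbase a
    have := h1.trans h2.symm
    rw [Quot.eq] at this
    exact hequiv.symm (hequiv.eqvGen_iff.mp this)
  choose gfun hg using hrel
  -- gfun a is a fixed point of ψ mod H
  have hfix : ∀ a : Quot r, ψ (QuotientGroup.mk (gfun a)) = QuotientGroup.mk (gfun a) := by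
    intro a
    rw [hψ]
    rw [QuotientGroup.eq]
    have hga := hg a
    have hmem : (φ (gfun a))⁻¹ * gfun a ∈ H := by
      have : (φ (gfun a))⁻¹ = ((base (f a) : G))⁻¹ * (gfun a)⁻¹ * ((repH a : H) : G) := by
        rw [hga]; group
      rw [this]
      have h1 : ((base (f a) : G))⁻¹ ∈ H := inv_mem (base (f a)).2
      have h2 : (gfun a)⁻¹ * ((repH a : H) : G) * gfun a ∈ H :=
        Subgroup.Normal.conj_mem' ‹H.Normal› _ (repH a).2 (gfun a)
      have := mul_mem h1 h2
      simpa [mul_assoc] using this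
    exact hmem
  -- the injection
  let Φ : Quot r → ReidemeisterClasses φ × {x : G ⧸ H // ψ x = x} :=
    fun a => (f a, ⟨QuotientGroup.mk (gfun a), hfix a⟩)
  have hinj : Function.Injective Φ := by
    intro a₁ a₂ hEq
    have h1 : f a₁ = f a₂ := congrArg Prod.fst hEq
    have h2 : (QuotientGroup.mk (gfun a₁) : G ⧸ H) = QuotientGroup.mk (gfun a₂) :=
      Subtype.ext_iff.mp (congrArg Prod.snd hEq)
    rw [QuotientGroup.eq] at h2
    set g₁ := gfun a₁
    set g₂ := gfun a₂
    have hm : g₂ * g₁⁻¹ ∈ H := by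
      have := Subgroup.Normal.conj_mem ‹H.Normal› _ h2 g₁
      simpa [mul_assoc] using this
    have key : r (repH a₁) (repH a₂) := by
      refine ⟨⟨g₂ * g₁⁻¹, hm⟩, ?_⟩
      have e₁ := hg a₁
      have e₂ := hg a₂
      rw [h1] at e₁
      have hb0 : ((base (f a₂) : H) : G) = g₁⁻¹ * ((repH a₁ : H) : G) * φ g₁ := by
        rw [e₁]; simp only [g₁]; group
      rw [e₂, hb0]
      simp only [map_mul, map_inv, mul_inv_rev]
      simp only [g₁, g₂]
      group
    have := Quot.sound key
    rw [hrep a₁, hrep a₂] at this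
    exact this
  calc Cardinal.mk (Quot r)
      ≤ Cardinal.mk (ReidemeisterClasses φ × {x : G ⧸ H // ψ x = x}) :=
        Cardinal.mk_le_of_injective hinj
    _ = Cardinal.mk (ReidemeisterClasses φ) * Cardinal.mk {x : G ⧸ H // ψ x = x} :=
        (Cardinal.mul_def _ _).symm
end

section
/- Let G be a finitely generated residually finite group and φ an automorphism of G with finite Reidemeister number R(φ) < ∞. Then the fixed-point subgroup C(φ) = {g ∈ G : φ(g) = g} is finite. -/
/-- A group is residually finite if every nontrivial element survives in some finite
quotient, i.e. avoids some finite-index normal subgroup (the kernel of a homomorphism to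
a finite group). -/
def ResiduallyFinite (G : Type*) [Group G] : Prop :=
  ∀ g : G, g ≠ 1 → ∃ N : Subgroup G, N.Normal ∧ Finite (G ⧸ N) ∧ g ∉ N

/-- Sylvester-style bound: if `1/d₁ + ⋯ + 1/dₖ = q` with `q.den ≤ b`, then each `dᵢ ≤ sylF k b`. -/
def sylF : ℕ → ℕ → ℕ
  | 0, _ => 1
  | (k+1), b => max ((k+1)*b) (sylF k ((k+1)*b*b))

lemma sylF_mono_right : ∀ k {b b'}, b ≤ b' → sylF k b ≤ sylF k b'
  | 0, _, _, _ => le_rfl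
  | (k+1), b, b', h => by
    simp only [sylF]
    exact max_le_max (Nat.mul_le_mul_left _ h)
      (sylF_mono_right k (by
        have : (k+1)*b*b ≤ (k+1)*b'*b' :=
          Nat.mul_le_mul (Nat.mul_le_mul_left _ h) h
        exact this))

lemma sylF_mono_left : ∀ {k k'} (_ : k ≤ k') (b), sylF k b ≤ sylF k' b := by
  intro k k' h
  induction h with
  | refl => intro b; exact le_rfl
  | @step m _ ih =>
    intro b
    refine le_trans (ih b) ?_
    calc sylF m b ≤ sylF m ((m+1)*b*b) := by
          refine sylF_mono_right m ?_
          calc b = 1*1*b := by ring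
          _ ≤ (m+1)*b*b := by
            rcases Nat.eq_zero_or_pos b with hb | hb
            · simp [hb]
            · have h1 : 1 ≤ m+1 := Nat.succ_le_succ (Nat.zero_le m)
              calc 1*1*b = b := by ring
              _ ≤ ((m+1)*b)*b := Nat.le_mul_of_pos_left b (by positivity)
      _ ≤ sylF (m+1) b := le_max_right _ _

lemma unitFracBound {ι : Type*} [DecidableEq ι] :
    ∀ (k b : ℕ), 0 < b → ∀ (s : Finset ι) (d : ι → ℕ), s.card = k →
      (∀ i ∈ s, 0 < d i) → ∀ q : ℚ, 0 < q → q.den ≤ b →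
      ∑ i ∈ s, (1:ℚ)/(d i) = q → ∀ i ∈ s, d i ≤ sylF k b := by
  intro k
  induction k with
  | zero =>
    intro b hb s d hcard _ q _ _ _ i hi
    rw [Finset.card_eq_zero] at hcard; subst hcard; exact absurd hi (by simp)
  | succ k IH =>
    intro b hb s d hcard hpos q hq hden hsum i hi
    -- find a small element
    have hne : s.Nonempty := Finset.card_pos.1 (hcard ▸ k.succ_pos)
    have hex : ∃ i₀ ∈ s, q / (k+1) ≤ 1 / (d i₀) := by
      by_contra hcon
      push_neg at hcon
      have : (∑ j ∈ s, (1:ℚ)/(d j)) < ∑ _j ∈ s, q/(k+1) :=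
        Finset.sum_lt_sum_of_nonempty hne fun j hj => hcon j hj
      rw [hsum, Finset.sum_const, hcard, nsmul_eq_mul] at this
      have hk1 : ((k:ℚ)+1) ≠ 0 := by positivity
      rw [show ((k+1 : ℕ) : ℚ) = (k:ℚ)+1 by push_cast; ring] at this
      rw [mul_div_cancel₀ q hk1] at this
      exact lt_irrefl _ this
    obtain ⟨i₀, hi₀, hbig⟩ := hex
    have hd₀pos : 0 < d i₀ := hpos i₀ hi₀
    -- q ≥ 1/b
    have hqb : (1:ℚ)/b ≤ q := by
      have hnum : (1:ℚ) ≤ (q.num : ℚ) := by exact_mod_cast Rat.num_pos.2 hq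
      have hdenb : (q.den : ℚ) ≤ (b:ℚ) := by exact_mod_cast hden
      have hdpos : (0:ℚ) < q.den := by exact_mod_cast q.pos
      have hbpos : (0:ℚ) < b := by exact_mod_cast hb
      calc (1:ℚ)/b ≤ (1:ℚ)/q.den := by
            apply one_div_le_one_div_of_le hdpos hdenb
        _ ≤ (q.num : ℚ)/q.den := by gcongr
        _ = q := q.num_div_den
    have hd₀ : d i₀ ≤ (k+1) * b := by
      have hkb : (0:ℚ) < ((k+1)*b : ℕ) := by positivity
      have h1 : (1:ℚ)/(((k+1)*b : ℕ) : ℚ) ≤ 1/(d i₀) := by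
        have hb' : (0:ℚ) < (b:ℚ) := by exact_mod_cast hb
        calc (1:ℚ)/(((k+1)*b : ℕ) : ℚ) = ((1:ℚ)/b)/((k:ℚ)+1) := by
              push_cast; field_simp
          _ ≤ q/((k:ℚ)+1) := by gcongr <;> positivity
          _ ≤ 1/(d i₀) := by
              have : q / ((k:ℚ)+1) = q / ((k+1 : ℕ) : ℚ) := by push_cast; ring_nf
              rw [this]; exact_mod_cast hbig
      have h2 := le_of_one_div_le_one_div hkb h1
      exact_mod_cast h2
    by_cases hcase : d i ≤ (k+1)*b
    · calc d i ≤ (k+1)*b := hcase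
        _ ≤ sylF (k+1) b := le_max_left _ _
    · have hine : i ≠ i₀ := fun h => hcase (h ▸ hd₀)
      have hierase : i ∈ s.erase i₀ := Finset.mem_erase.2 ⟨hine, hi⟩
      set q' : ℚ := q - 1/(d i₀) with hq'def
      have hsum' : ∑ j ∈ s.erase i₀, (1:ℚ)/(d j) = q' := by
        have h2 := Finset.add_sum_erase s (fun j => (1:ℚ)/(d j)) hi₀
        rw [hq'def]; linarith [hsum]
      have hq'pos : 0 < q' := by
        rw [← hsum']
        apply Finset.sum_pos ?_ ⟨i, hierase⟩
        intro j hj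
        have := hpos j (Finset.mem_of_mem_erase hj)
        positivity
      have hden' : q'.den ≤ (k+1)*b*b := by
        have hdvd : q'.den ∣ q.den * ((1:ℚ)/(d i₀)).den := by
          rw [hq'def, sub_eq_add_neg]
          have h3 := Rat.add_den_dvd q (-(1/(d i₀)))
          simpa using h3
        have hden1 : ((1:ℚ)/(d i₀)).den = d i₀ := by
          rw [one_div]; exact Rat.inv_natCast_den_of_pos hd₀pos
        rw [hden1] at hdvd
        have hle := Nat.le_of_dvd (by positivity) hdvd
        calc q'.den ≤ q.den * d i₀ := hle
          _ ≤ b * ((k+1)*b) := Nat.mul_le_mul hden hd₀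
          _ = (k+1)*b*b := by ring
      have hcard' : (s.erase i₀).card = k := by
        rw [Finset.card_erase_of_mem hi₀, hcard]; simp
      have hrec := IH ((k+1)*b*b) (by positivity) (s.erase i₀) d hcard'
        (fun j hj => hpos j (Finset.mem_of_mem_erase hj)) q' hq'pos hden' hsum' i hierase
      calc d i ≤ sylF k ((k+1)*b*b) := hrec
        _ ≤ sylF (k+1) b := le_max_right _ _



/-- Type synonym for `H` carrying the twisted conjugation action of `ψ`. -/
def TwAct {H : Type*} [Group H] (_ψ : H ≃* H) : Type _ := H

namespace TwAct
variable {H : Type*} [Group H] (ψ : H ≃* H)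

def mk : H → TwAct ψ := id
def un : TwAct ψ → H := id

instance : MulAction H (TwAct ψ) where
  smul g x := mk ψ (g * un ψ x * (ψ g)⁻¹)
  one_smul x := by
    show mk ψ (1 * un ψ x * (ψ 1)⁻¹) = x
    exact (by simp : (1:H) * un ψ x * (ψ 1)⁻¹ = un ψ x)
  mul_smul g h x := by
    show mk ψ ((g*h) * un ψ x * (ψ (g*h))⁻¹)
      = mk ψ (g * un ψ (mk ψ (h * un ψ x * (ψ h)⁻¹)) * (ψ g)⁻¹)
    show (g*h) * un ψ x * (ψ (g*h))⁻¹ = g * (h * un ψ x * (ψ h)⁻¹) * (ψ g)⁻¹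
    simp only [map_mul]
    group

lemma smul_def (g : H) (x : TwAct ψ) : g • x = mk ψ (g * un ψ x * (ψ g)⁻¹) := rfl

instance [Finite H] : Finite (TwAct ψ) := by
  have : TwAct ψ = H := rfl
  rw [this]; infer_instance

/-- Reidemeister classes are orbits of the twisted action. -/
noncomputable def classesEquivOrbits :
    ReidemeisterClasses ψ ≃ MulAction.orbitRel.Quotient H (TwAct ψ) := by
  refine Quot.congr (Equiv.refl _ : H ≃ TwAct ψ) ?_
  intro a b
  show twistedConj ψ a b ↔ MulAction.orbitRel H (TwAct ψ) (mk ψ a) (mk ψ b)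
  rw [MulAction.orbitRel_apply, MulAction.mem_orbit_iff]
  constructor
  · rintro ⟨h, rfl⟩
    exact ⟨h⁻¹, by show h⁻¹ * (h * a * (ψ h)⁻¹) * (ψ h⁻¹)⁻¹ = a; simp only [map_inv, inv_inv]; group⟩
  · rintro ⟨g, hg⟩
    refine ⟨g⁻¹, ?_⟩
    have : g * un ψ (mk ψ b) * (ψ g)⁻¹ = a := congrArg (un ψ) hg
    simp only [mk, un, id] at this ⊢
    rw [← this]; simp; group

noncomputable def stab_one_equiv : {h : H // ψ h = h} ≃ MulAction.stabilizer H (mk ψ 1) := by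
  refine Equiv.subtypeEquiv (Equiv.refl H) fun g => ?_
  rw [MulAction.mem_stabilizer_iff]
  show ψ g = g ↔ g • mk ψ (1:H) = mk ψ 1
  rw [smul_def]
  constructor
  · intro h; show g * 1 * (ψ g)⁻¹ = 1; simp [h]
  · intro h
    have : g * un ψ (mk ψ 1) * (ψ g)⁻¹ = 1 := congrArg (un ψ) h
    simp only [mk, un, id, mul_one] at this
    rw [mul_inv_eq_one] at this
    exact this.symm

end TwAct

open MulAction in
lemma fix_card_le {H : Type*} [Group H] [Finite H] (ψ : H ≃* H) :
    Nat.card {h : H // ψ h = h} ≤ sylF (Nat.card (ReidemeisterClasses ψ)) 1 := by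
  classical
  letI : Fintype H := Fintype.ofFinite H
  set α := TwAct ψ with hα
  haveI : Finite α := inferInstance
  letI : Fintype α := Fintype.ofFinite α
  set Ω := orbitRel.Quotient H α with hΩ
  letI : Fintype Ω := Fintype.ofFinite Ω
  set n := Nat.card H with hn
  have hnpos : 0 < n := Nat.card_pos
  have hnα : Nat.card α = n := rfl
  -- class equation
  have hsum : ∑ ω : Ω, (stabilizer H (Quotient.out ω)).index = n := by
    have h1 : Nat.card α = Nat.card (Σ ω : Ω, orbit H (Quotient.out ω)) :=
      Nat.card_congr (selfEquivSigmaOrbits H α)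
    letI : ∀ ω : Ω, Fintype (orbit H (Quotient.out ω)) := fun ω => Fintype.ofFinite _
    rw [Nat.card_eq_fintype_card, Nat.card_eq_fintype_card, Fintype.card_sigma] at h1
    have h2 : ∀ ω : Ω, Fintype.card (orbit H (Quotient.out ω))
        = (stabilizer H (Quotient.out ω)).index := by
      intro ω
      rw [index_stabilizer, ← Nat.card_coe_set_eq, Nat.card_eq_fintype_card]
    rw [← hnα, Nat.card_eq_fintype_card, h1]
    exact Finset.sum_congr rfl fun ω _ => (h2 ω).symm
  set c : Ω → ℕ := fun ω => Nat.card (stabilizer H (Quotient.out ω)) with hc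
  have hcpos : ∀ ω : Ω, 0 < c ω := fun ω => Nat.card_pos
  have hci : ∀ ω : Ω, c ω * (stabilizer H (Quotient.out ω)).index = n :=
    fun ω => Subgroup.card_mul_index _
  -- rationalize
  have hQ : ∑ ω : Ω, (1:ℚ)/(c ω) = 1 := by
    have hterm : ∀ ω : Ω, (1:ℚ)/(c ω)
        = ((stabilizer H (Quotient.out ω)).index : ℚ)/(n:ℚ) := by
      intro ω
      have := hci ω
      have hcq : ((c ω : ℚ)) ≠ 0 := by exact_mod_cast (hcpos ω).ne'
      have hnq : ((n:ℚ)) ≠ 0 := by exact_mod_cast hnpos.ne'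
      field_simp
      exact_mod_cast this.symm
    rw [Finset.sum_congr rfl fun ω _ => hterm ω, ← Finset.sum_div]
    rw [show ∑ ω : Ω, ((stabilizer H (Quotient.out ω)).index : ℚ) = ((n:ℚ)) by
      exact_mod_cast congrArg (Nat.cast : ℕ → ℚ) hsum]
    field_simp
  -- apply the unit fraction bound
  have hbound : ∀ ω : Ω, c ω ≤ sylF (Fintype.card Ω) 1 := by
    intro ω
    exact unitFracBound (Fintype.card Ω) 1 one_pos Finset.univ c
      (by simp) (fun i _ => hcpos i) 1 one_pos (by norm_num) hQ ω (Finset.mem_univ ω)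
  have hcardΩ : Fintype.card Ω = Nat.card (ReidemeisterClasses ψ) := by
    rw [← Nat.card_eq_fintype_card]
    exact (Nat.card_congr (TwAct.classesEquivOrbits ψ)).symm
  -- identify the fixed subgroup with a stabilizer
  set ω₀ : Ω := ⟦TwAct.mk ψ 1⟧ with hω₀
  have hrel : orbitRel H α (Quotient.out ω₀) (TwAct.mk ψ 1) :=
    Quotient.exact (by rw [Quotient.out_eq])
  have hfix : Nat.card {h : H // ψ h = h} = c ω₀ := by
    rw [Nat.card_congr (TwAct.stab_one_equiv ψ)]
    exact (Nat.card_congr (stabilizerEquivStabilizerOfOrbitRel hrel).toEquiv).symm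
  rw [hfix, ← hcardΩ]
  exact hbound ω₀



section Sep
variable {G : Type*} [Group G]

/-- Finitely many homomorphisms from an f.g. group to a finite group. -/
lemma finite_homs (hfg : Group.FG G) (P : Type*) [Group P] [Finite P] :
    Finite (G →* P) := by
  obtain ⟨_n, S, _hcard, hS⟩ := Group.fg_iff'.mp hfg
  have hinj : Function.Injective (fun (f : G →* P) => (fun s : (S : Set G) => f s)) := by
    intro f g hfg'
    refine MonoidHom.eq_of_eqOn_dense hS ?_
    intro x hx
    exact congrFun hfg' ⟨x, hx⟩
  exact Finite.of_injective _ hinj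

/-- The separating φ-invariant finite-index normal subgroup. -/
lemma exists_invariant_subgroup (hfg : Group.FG G) (hrf : ResiduallyFinite G)
    (φ : G ≃* G) (T : Set G) (hT : T.Finite) (h1 : (1:G) ∉ T) :
    ∃ M : Subgroup G, M.Normal ∧ Finite (G ⧸ M) ∧
      M.map (φ : G →* G) = M ∧ ∀ t ∈ T, t ∉ M := by
  classical
  haveI := hT.fintype
  -- choose a finite quotient for each t ∈ T
  have hchoice : ∀ t : T, ∃ N : Subgroup G, N.Normal ∧ Finite (G ⧸ N) ∧ (t:G) ∉ N :=
    fun t => hrf t (fun h => h1 (h ▸ t.2))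
  choose N hNorm hFin hNot using hchoice
  set n : ℕ := Finset.univ.sup (fun t : T => Nat.card (G ⧸ N t)) with hn
  -- each t is killed by some hom to Perm (Fin n)
  have hkill : ∀ t : T, ∃ f : G →* Equiv.Perm (Fin n), (t:G) ∉ f.ker := by
    intro t
    haveI := hNorm t
    haveI := hFin t
    letI : Fintype (G ⧸ N t) := Fintype.ofFinite _
    have hcard : Fintype.card (G ⧸ N t) ≤ Fintype.card (Fin n) := by
      rw [Fintype.card_fin, ← Nat.card_eq_fintype_card]
      exact Finset.le_sup (f := fun t : T => Nat.card (G ⧸ N t)) (Finset.mem_univ t)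
    obtain ⟨ι⟩ := Function.Embedding.nonempty_of_card_le hcard
    refine ⟨(Equiv.Perm.viaEmbeddingHom ι).comp
      ((MulAction.toPermHom (G ⧸ N t) (G ⧸ N t)).comp (QuotientGroup.mk' (N t))), ?_⟩
    intro hker
    simp only [MonoidHom.mem_ker, MonoidHom.comp_apply] at hker
    have h2 : (MulAction.toPermHom (G ⧸ N t) (G ⧸ N t)) ((QuotientGroup.mk' (N t)) (t:G)) = 1 := by
      apply Equiv.Perm.viaEmbeddingHom_injective ι
      rw [map_one]
      exact hker
    have h3 : ((QuotientGroup.mk' (N t)) (t:G)) = 1 := by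
      have := congrArg (fun (p : Equiv.Perm (G ⧸ N t)) => p 1) h2
      simpa [MulAction.toPermHom] using this
    exact hNot t ((QuotientGroup.eq_one_iff _).mp h3)
  haveI : Finite (G →* Equiv.Perm (Fin n)) := finite_homs hfg _
  set M : Subgroup G := ⨅ f : G →* Equiv.Perm (Fin n), f.ker with hM
  have hmem : ∀ x : G, x ∈ M ↔ ∀ f : G →* Equiv.Perm (Fin n), f x = 1 := by
    intro x
    rw [hM, Subgroup.mem_iInf]
    exact forall_congr' fun f => Iff.rfl
  refine ⟨M, ?_, ?_, ?_, ?_⟩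
  · constructor
    intro x hx g
    rw [hmem] at hx ⊢
    intro f
    simp [hx f]
  · have hFI : ∀ f : G →* Equiv.Perm (Fin n), f.ker.FiniteIndex := by
      intro f
      constructor
      rw [Subgroup.index_ker]
      haveI : Finite f.range := inferInstance
      exact Nat.card_pos.ne'
    haveI : M.FiniteIndex := Subgroup.finiteIndex_iInf hFI
    have : M.index ≠ 0 := Subgroup.FiniteIndex.index_ne_zero
    rw [Subgroup.index_eq_card] at this
    exact Nat.finite_of_card_ne_zero this
  · ext x
    simp only [Subgroup.mem_map]
    constructor
    · rintro ⟨y, hy, rfl⟩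
      rw [hmem] at hy ⊢
      intro f
      have := hy (f.comp (φ : G →* G))
      simpa using this
    · intro hx
      refine ⟨φ.symm x, ?_, by simp⟩
      rw [hmem] at hx ⊢
      intro f
      have := hx (f.comp (φ.symm : G →* G))
      simpa using this
  · intro t ht hmem'
    obtain ⟨f, hf⟩ := hkill ⟨t, ht⟩
    exact hf ((hmem t).mp hmem' f)

end Sep

/-- If `G` is finitely generated and residually finite and `R(φ) < ∞`, then the
fixed-point subgroup `C(φ) = {g : φ g = g}` is finite. -/
theorem stmt4 {G : Type*} [Group G] (hfg : Group.FG G) (hrf : ResiduallyFinite G)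
    (φ : G ≃* G) (hR : Finite (ReidemeisterClasses φ)) :
    Finite {g : G // φ g = g} := by
  classical
  by_contra hinf
  rw [not_finite_iff_infinite] at hinf
  set k := Nat.card (ReidemeisterClasses φ) with hk
  set B := sylF k 1 with hB
  -- pick B+1 distinct fixed points
  let e : ℕ ↪ {g : G // φ g = g} := Infinite.natEmbedding _
  let c : Fin (B+1) → G := fun i => (e i).1
  have hcfix : ∀ i, φ (c i) = c i := fun i => (e i).2
  have hcinj : Function.Injective c := by
    intro i j h
    have : e (i : ℕ) = e (j : ℕ) := Subtype.ext h
    exact Fin.ext (e.injective this)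
  set T : Set G := {x : G | ∃ i j : Fin (B+1), i ≠ j ∧ x = (c i)⁻¹ * c j} with hT
  have hTfin : T.Finite := by
    apply Set.Finite.subset (Set.finite_range
      (fun p : Fin (B+1) × Fin (B+1) => (c p.1)⁻¹ * c p.2))
    rintro x ⟨i, j, _, rfl⟩
    exact ⟨(i, j), rfl⟩
  have h1T : (1:G) ∉ T := by
    rintro ⟨i, j, hij, hx⟩
    apply hij
    apply hcinj
    rw [← mul_left_cancel_iff (a := (c i)⁻¹), ← hx, inv_mul_cancel]
  obtain ⟨M, hNorm, hFinQ, hMap, hAvoid⟩ :=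
    exists_invariant_subgroup hfg hrf φ T hTfin h1T
  haveI := hNorm
  haveI := hFinQ
  set φbar : (G ⧸ M) ≃* (G ⧸ M) := QuotientGroup.congr M M φ hMap with hφbar
  have hbar_mk : ∀ x : G, φbar (x : G ⧸ M) = ((φ x : G) : G ⧸ M) := fun x =>
    QuotientGroup.congr_mk M M φ hMap x
  -- surjection on Reidemeister classes
  have hrelmap : ∀ a b : G, twistedConj φ a b →
      twistedConj φbar ((a : G ⧸ M)) ((b : G ⧸ M)) := by
    rintro a b ⟨h, rfl⟩
    refine ⟨(h : G ⧸ M), ?_⟩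
    rw [hbar_mk]
    simp
  let ρ : ReidemeisterClasses φ → ReidemeisterClasses φbar :=
    Quot.map (fun g : G => (g : G ⧸ M)) hrelmap
  have hρsurj : Function.Surjective ρ := by
    intro y
    obtain ⟨q, rfl⟩ := Quot.exists_rep y
    obtain ⟨x, rfl⟩ := QuotientGroup.mk_surjective q
    exact ⟨Quot.mk _ x, rfl⟩
  haveI : Finite (ReidemeisterClasses φbar) := Finite.of_surjective ρ hρsurj
  have hk' : Nat.card (ReidemeisterClasses φbar) ≤ k :=
    Nat.card_le_card_of_surjective ρ hρsurj
  have hbound : Nat.card {h : G ⧸ M // φbar h = h} ≤ B :=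
    le_trans (fix_card_le φbar) (sylF_mono_left hk' 1)
  -- but there are at least B+1 fixed points downstairs
  let c' : Fin (B+1) → {h : G ⧸ M // φbar h = h} := fun i =>
    ⟨(c i : G ⧸ M), by rw [hbar_mk, hcfix]⟩
  have hc'inj : Function.Injective c' := by
    intro i j h
    have h2 : ((c i : G) : G ⧸ M) = ((c j : G) : G ⧸ M) := congrArg Subtype.val h
    rw [QuotientGroup.eq] at h2
    by_contra hij
    exact hAvoid _ ⟨i, j, hij, rfl⟩ h2
  have hle : B + 1 ≤ Nat.card {h : G ⧸ M // φbar h = h} := by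
    have := Nat.card_le_card_of_injective c' hc'inj
    simpa using this
  omega
end

section
/- Let k ≥ 1, let T be a finite nonempty subset of ℤ^k, let t ≥ 1, and let s₁, …, s_t be pairwise distinct elements of ℤ^k. If the set of points of ℤ^k that are covered by an odd number of the translates T + s₁, …, T + s_t is a singleton, then t = 1 and T is a singleton. (Equivalently, in the group ⨁_{x ∈ ℤ^k} ℤ/2ℤ of finitely supported functions ℤ^k → ℤ/2ℤ, a sum of indicator functions of pairwise distinct translates of a finite nonempty set T can equal a single delta function δ_z only when t = 1 and |T| = 1.) -/
local instance (priority := 10000) wfFinLT (k : ℕ) : WellFoundedLT (Fin k) := inferInstance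

noncomputable local instance (priority := 10000) piLexLOACG (k : ℕ) :
    IsOrderedCancelAddMonoid (Lex (Fin k → ℤ)) :=
  inferInstance

lemma aux_card_max {k : ℕ} {T : Finset (Fin k → ℤ)} {t : ℕ} {s : Fin t → (Fin k → ℤ)}
    (hs : Function.Injective s)
    {a : Fin k → ℤ} (haT : a ∈ T) (ha : ∀ τ ∈ T, toLex τ ≤ toLex a)
    {i₀ : Fin t} (hi : ∀ i, toLex (s i) ≤ toLex (s i₀)) :
    (Finset.univ.filter fun i : Fin t => (a + s i₀) - s i ∈ T).card = 1 := by
  rw [Finset.card_eq_one]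
  refine ⟨i₀, ?_⟩
  ext i
  simp only [Finset.mem_filter, Finset.mem_univ, true_and, Finset.mem_singleton]
  constructor
  · intro hmem
    have h1 : toLex (a + s i₀ - s i) ≤ toLex a := ha _ hmem
    rw [toLex_sub, toLex_add] at h1
    have h2 : toLex (s i₀) ≤ toLex (s i) :=
      le_of_add_le_add_left (sub_le_iff_le_add.mp h1)
    have h3 : toLex (s i) = toLex (s i₀) := le_antisymm (hi i) h2
    exact hs (toLex.injective h3)
  · rintro rfl
    simpa using haT

lemma aux_card_min {k : ℕ} {T : Finset (Fin k → ℤ)} {t : ℕ} {s : Fin t → (Fin k → ℤ)}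
    (hs : Function.Injective s)
    {a : Fin k → ℤ} (haT : a ∈ T) (ha : ∀ τ ∈ T, toLex a ≤ toLex τ)
    {i₀ : Fin t} (hi : ∀ i, toLex (s i₀) ≤ toLex (s i)) :
    (Finset.univ.filter fun i : Fin t => (a + s i₀) - s i ∈ T).card = 1 := by
  rw [Finset.card_eq_one]
  refine ⟨i₀, ?_⟩
  ext i
  simp only [Finset.mem_filter, Finset.mem_univ, true_and, Finset.mem_singleton]
  constructor
  · intro hmem
    have h1 : toLex a ≤ toLex (a + s i₀ - s i) := ha _ hmem
    rw [toLex_sub, toLex_add] at h1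
    have h2 : toLex (s i) ≤ toLex (s i₀) :=
      le_of_add_le_add_left (le_sub_iff_add_le.mp h1)
    have h3 : toLex (s i) = toLex (s i₀) := le_antisymm h2 (hi i)
    exact hs (toLex.injective h3)
  · rintro rfl
    simpa using haT

/-- If the points of `ℤ^k` covered by an odd number of the pairwise distinct translates
`T + s 0, …, T + s (t-1)` of a finite nonempty set `T` form a singleton, then `t = 1`
and `T` is a singleton. -/
theorem stmt6 (k : ℕ) (hk : 1 ≤ k) (T : Finset (Fin k → ℤ)) (hT : T.Nonempty)
    (t : ℕ) (ht : 1 ≤ t) (s : Fin t → (Fin k → ℤ)) (hs : Function.Injective s)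
    (z : Fin k → ℤ)
    (hodd : ∀ x : Fin k → ℤ,
      (Odd (Finset.univ.filter fun i : Fin t => x - s i ∈ T).card ↔ x = z)) :
    t = 1 ∧ T.card = 1 := by
  have htne : (Finset.univ : Finset (Fin t)).Nonempty := ⟨⟨0, ht⟩, Finset.mem_univ _⟩
  obtain ⟨a, haT, ha⟩ := T.exists_max_image (fun x => (toLex x : Lex (Fin k → ℤ))) hT
  obtain ⟨a', haT', ha'⟩ := T.exists_min_image (fun x => (toLex x : Lex (Fin k → ℤ))) hT
  obtain ⟨i₀, -, hi₀⟩ := Finset.univ.exists_max_image (fun i => (toLex (s i) : Lex (Fin k → ℤ))) htne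
  obtain ⟨i₁, -, hi₁⟩ := Finset.univ.exists_min_image (fun i => (toLex (s i) : Lex (Fin k → ℤ))) htne
  simp only [Finset.mem_univ, forall_const] at hi₀ hi₁
  have hmax : a + s i₀ = z := by
    rw [← hodd (a + s i₀), aux_card_max hs haT ha hi₀]
    exact odd_one
  have hmin : a' + s i₁ = z := by
    rw [← hodd (a' + s i₁), aux_card_min hs haT' ha' hi₁]
    exact odd_one
  have heq : toLex a + toLex (s i₀) = toLex a' + toLex (s i₁) := by
    rw [← toLex_add, ← toLex_add, hmax, hmin]
  have h1 : toLex a' ≤ toLex a := ha' a haT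
  have h2 : toLex (s i₁) ≤ toLex (s i₀) := hi₁ i₀
  have ha_eq : toLex a = toLex a' := by
    have h3 : toLex a + toLex (s i₀) ≤ toLex a' + toLex (s i₀) :=
      heq.le.trans (add_le_add_right h2 _)
    exact le_antisymm (le_of_add_le_add_right h3) h1
  have hs_eq : toLex (s i₀) = toLex (s i₁) := by
    have h4 : toLex a + toLex (s i₀) ≤ toLex a + toLex (s i₁) :=
      heq.le.trans (add_le_add_left h1 _)
    exact le_antisymm (le_of_add_le_add_left h4) (hi₀ i₁)
  constructor
  · have hall : ∀ i : Fin t, i = i₀ := fun i =>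
      hs (toLex.injective (le_antisymm (hi₀ i) (hs_eq ▸ hi₁ i)))
    have := Fintype.card_eq_one_iff.mpr ⟨i₀, hall⟩
    simpa using this
  · rw [Finset.card_eq_one]
    refine ⟨a, Finset.eq_singleton_iff_unique_mem.mpr ⟨haT, fun τ hτ => ?_⟩⟩
    apply toLex.injective
    exact le_antisymm (ha τ hτ) (ha_eq ▸ ha' τ hτ)
end

section
/- Let Γ = ℤ_2 wr ℤ^k (k ≥ 1) and let φ be an automorphism of Γ, with restriction φ' to Σ. Then φ' permutes the generators δ_x: there is a bijection σ : ℤ^k → ℤ^k such that φ'(δ_x) = δ_{σ(x)} for every x ∈ ℤ^k. In particular, there is a unique x₀ ∈ ℤ^k with φ'(δ_0) = δ_{x₀}, and then φ'(δ_y) = δ_{φ̄(y) + x₀} for all y ∈ ℤ^k. -/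
/-- `Lamp q k` is `Σ = ⨁_{x ∈ ℤ^k} ℤ/qℤ`: finitely supported functions `ℤ^k → ℤ/qℤ`. -/
abbrev Lamp (q k : ℕ) := (Fin k → ℤ) →₀ ZMod q

/-- The shift action of `ℤ^k` on `Σ`: `α(y)(δ_x) = δ_{x+y}`. -/
noncomputable def lampShift (q k : ℕ) :
    Multiplicative (Fin k → ℤ) →* MulAut (Multiplicative (Lamp q k)) where
  toFun y := AddEquiv.toMultiplicative (Finsupp.domCongr (Equiv.addRight (Multiplicative.toAdd y)))
  map_one' := by
    refine MulEquiv.ext fun f => ?_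
    refine Multiplicative.toAdd.injective ?_
    ext x
    simp <;> rfl
  map_mul' y z := by
    refine MulEquiv.ext fun f => ?_
    refine Multiplicative.toAdd.injective ?_
    ext x
    simp [Equiv.Perm.mul_def, add_comm, add_assoc, add_left_comm]

/-- The restricted wreath product `ℤ_q wr ℤ^k = Σ ⋊ ℤ^k`. -/
abbrev Wreath (q k : ℕ) :=
  SemidirectProduct (Multiplicative (Lamp q k)) (Multiplicative (Fin k → ℤ)) (lampShift q k)

/-- `δ_x ∈ Σ`: the function equal to `1` at `x` and `0` elsewhere (written multiplicatively). -/
noncomputable def lampDelta (q k : ℕ) (x : Fin k → ℤ) : Multiplicative (Lamp q k) :=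
  Multiplicative.ofAdd (Finsupp.single x 1)

namespace Stmt7Aux

open SemidirectProduct Multiplicative

abbrev Rk (k : ℕ) := AddMonoidAlgebra (ZMod 2) (Fin k → ℤ)

section Units
lemma zmod2_eq_one {c : ZMod 2} (h : c ≠ 0) : c = 1 := by
  revert h; revert c; decide

variable {A : Type*} [AddCommGroup A] [LinearOrder A] [IsOrderedAddMonoid A]

lemma eq_single_of_mul_eq_one {f g : AddMonoidAlgebra (ZMod 2) A} (h : f * g = 1) :
    ∃ a : A, f = AddMonoidAlgebra.single a 1 := by
  classical
  have hone : (1 : AddMonoidAlgebra (ZMod 2) A) ≠ 0 := one_ne_zero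
  have hf : f ≠ 0 := by rintro rfl; rw [zero_mul] at h; exact hone h.symm
  have hg : g ≠ 0 := by rintro rfl; rw [mul_zero] at h; exact hone h.symm
  have hfs : f.coeff.support.Nonempty :=
    Finsupp.support_nonempty_iff.mpr (by rwa [Ne, AddMonoidAlgebra.coeff_eq_zero])
  have hgs : g.coeff.support.Nonempty :=
    Finsupp.support_nonempty_iff.mpr (by rwa [Ne, AddMonoidAlgebra.coeff_eq_zero])
  set a := f.coeff.support.max' hfs with ha
  set b := g.coeff.support.max' hgs with hb
  set a' := f.coeff.support.min' hfs with ha'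
  set b' := g.coeff.support.min' hgs with hb'
  have hsupp1 : (1 : AddMonoidAlgebra (ZMod 2) A).coeff.support = {0} := by
    rw [AddMonoidAlgebra.one_def, AddMonoidAlgebra.coeff_single]
    exact Finsupp.support_single_ne_zero _ one_ne_zero
  have hmax : a + b = 0 := by
    have huniq : UniqueAdd f.coeff.support g.coeff.support a b := by
      intro p q hp hq hpq
      have hpa : p ≤ a := Finset.le_max' _ _ hp
      have hqb : q ≤ b := Finset.le_max' _ _ hq
      have hp' : p = a := by
        by_contra hne
        exact absurd hpq (ne_of_lt (add_lt_add_of_lt_of_le (lt_of_le_of_ne hpa hne) hqb))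
      refine ⟨hp', ?_⟩
      subst hp'
      exact add_left_cancel hpq
    have : (f * g).coeff (a + b) ≠ 0 := by
      rw [AddMonoidAlgebra.coeff_mul_add_of_uniqueAdd huniq]
      exact mul_ne_zero (Finsupp.mem_support_iff.mp (f.coeff.support.max'_mem hfs))
        (Finsupp.mem_support_iff.mp (g.coeff.support.max'_mem hgs))
    have : a + b ∈ (1 : AddMonoidAlgebra (ZMod 2) A).coeff.support := by
      rw [← h]; exact Finsupp.mem_support_iff.mpr this
    rw [hsupp1] at this
    exact Finset.mem_singleton.mp this
  have hmin : a' + b' = 0 := by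
    have huniq : UniqueAdd f.coeff.support g.coeff.support a' b' := by
      intro p q hp hq hpq
      have hpa : a' ≤ p := Finset.min'_le _ _ hp
      have hqb : b' ≤ q := Finset.min'_le _ _ hq
      have hp' : p = a' := by
        by_contra hne
        exact absurd hpq (ne_of_gt (add_lt_add_of_lt_of_le (lt_of_le_of_ne hpa (Ne.symm hne)) hqb))
      refine ⟨hp', ?_⟩
      subst hp'
      exact add_left_cancel hpq
    have : (f * g).coeff (a' + b') ≠ 0 := by
      rw [AddMonoidAlgebra.coeff_mul_add_of_uniqueAdd huniq]
      exact mul_ne_zero (Finsupp.mem_support_iff.mp (f.coeff.support.min'_mem hfs))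
        (Finsupp.mem_support_iff.mp (g.coeff.support.min'_mem hgs))
    have : a' + b' ∈ (1 : AddMonoidAlgebra (ZMod 2) A).coeff.support := by
      rw [← h]; exact Finsupp.mem_support_iff.mpr this
    rw [hsupp1] at this
    exact Finset.mem_singleton.mp this
  have haa' : a = a' := by
    have h1 : a' ≤ a := Finset.min'_le _ _ (f.coeff.support.max'_mem hfs)
    have h2 : b' ≤ b := Finset.min'_le _ _ (g.coeff.support.max'_mem hgs)
    have hsum : a + b = a' + b' := by rw [hmax, hmin]
    have : a + b ≤ a' + b := add_le_add_left (le_of_eq (by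
      have : a + b' ≤ a' + b' := by
        calc a + b' ≤ a + b := add_le_add (le_refl a) h2
        _ = a' + b' := hsum
      exact le_antisymm (le_of_add_le_add_right this) h1)) b
    have : a ≤ a' := le_of_add_le_add_right this
    exact le_antisymm this h1
  have hsub : f.coeff.support ⊆ {a} := by
    intro x hx
    refine Finset.mem_singleton.mpr (le_antisymm (Finset.le_max' _ _ hx) ?_)
    rw [haa']
    exact Finset.min'_le _ _ hx
  have := Finsupp.support_subset_singleton.mp hsub
  refine ⟨a, ?_⟩
  apply AddMonoidAlgebra.coeff_injective
  rw [this, AddMonoidAlgebra.coeff_single, zmod2_eq_one (Finsupp.mem_support_iff.mp (f.coeff.support.max'_mem hfs))]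

end Units

variable {k : ℕ}

lemma lamp_sq (f : Multiplicative (Lamp 2 k)) : f * f = 1 := by
  refine Multiplicative.toAdd.injective ?_
  rw [toAdd_mul, toAdd_one]
  ext x
  simp only [Finsupp.add_apply, Finsupp.coe_zero, Pi.zero_apply]
  exact CharTwo.add_self_eq_zero _

lemma eq_inl_of_sq (γ : Wreath 2 k) (h : γ * γ = 1) : γ = inl γ.left := by
  have hr : rightHom γ * rightHom γ = 1 := by rw [← map_mul, h, map_one]
  have hy : toAdd (rightHom γ) + toAdd (rightHom γ) = 0 := by
    rw [← toAdd_mul, hr, toAdd_one]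
  have h0 : toAdd (rightHom γ) = 0 := by
    funext x
    have h1 := congrFun hy x
    have h2 : (0 : Fin k → ℤ) x = 0 := rfl
    rw [Pi.add_apply, h2] at h1
    rw [Pi.zero_apply]
    omega
  have hre : γ.right = 1 := by
    have : rightHom γ = 1 := Multiplicative.toAdd.injective (by rw [h0, toAdd_one])
    rwa [rightHom_eq_right] at this
  conv_lhs => rw [← inl_left_mul_inr_right γ]
  rw [hre, map_one, mul_one]

variable (φ : Wreath 2 k ≃* Wreath 2 k)

lemma phi_inl (f : Multiplicative (Lamp 2 k)) :
    φ (inl f) = inl (φ (inl f)).left := by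
  apply eq_inl_of_sq
  rw [← map_mul, ← map_mul, lamp_sq, map_one, map_one]

/-- `φ'`, the restriction of `φ` to `Σ`. -/
noncomputable def Lfun (f : Multiplicative (Lamp 2 k)) : Multiplicative (Lamp 2 k) :=
  (φ (inl f)).left

lemma inl_Lfun (f : Multiplicative (Lamp 2 k)) : φ (inl f) = inl (Lfun φ f) := phi_inl φ f

lemma Lfun_mul (f g : Multiplicative (Lamp 2 k)) :
    Lfun φ (f * g) = Lfun φ f * Lfun φ g := by
  apply inl_injective (φ := lampShift 2 k)
  rw [map_mul, ← inl_Lfun, ← inl_Lfun, ← inl_Lfun, ← map_mul, ← map_mul]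

lemma Lfun_symm_Lfun (f : Multiplicative (Lamp 2 k)) : Lfun φ.symm (Lfun φ f) = f := by
  apply inl_injective (φ := lampShift 2 k)
  rw [← inl_Lfun, ← inl_Lfun, MulEquiv.symm_apply_apply]

/-- `φ̄`, the automorphism induced on `ℤ^k`. -/
noncomputable def Bmap (y : Fin k → ℤ) : Fin k → ℤ :=
  toAdd (rightHom (φ (inr (ofAdd y))))

lemma rightHom_phi_inr (y : Fin k → ℤ) :
    rightHom (φ (inr (ofAdd y))) = ofAdd (Bmap φ y) := by
  rw [Bmap, ofAdd_toAdd]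

lemma Bmap_symm_Bmap (y : Fin k → ℤ) : Bmap φ.symm (Bmap φ y) = y := by
  set γ := φ (inr (ofAdd y)) with hγ
  have h2 : (inr γ.right : Wreath 2 k) = (inl γ.left)⁻¹ * γ := by
    rw [eq_inv_mul_iff_mul_eq, inl_left_mul_inr_right]
  have h5 : (inl γ.left)⁻¹ = (inl (γ.left⁻¹) : Wreath 2 k) := (map_inv inl γ.left).symm
  have h4 : rightHom (φ.symm (inr γ.right)) = ofAdd y := by
    rw [h2, h5, map_mul, map_mul, inl_Lfun φ.symm, rightHom_inl, one_mul, hγ,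
      MulEquiv.symm_apply_apply, rightHom_inr]
  have h6 : ofAdd (Bmap φ y) = γ.right := by
    rw [← rightHom_phi_inr, hγ, rightHom_eq_right]
  show toAdd (rightHom (φ.symm (inr (ofAdd (Bmap φ y))))) = y
  rw [h6, h4, toAdd_ofAdd]


lemma conj_inl (γ : Wreath 2 k) (t : Multiplicative (Lamp 2 k)) :
    γ * inl t * γ⁻¹ = inl (lampShift 2 k γ.right t) := by
  have hcomm : ∀ (c t' : Multiplicative (Lamp 2 k)),
      (inl c : Wreath 2 k) * inl t' * (inl c)⁻¹ = inl t' := by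
    intro c t'
    rw [← map_inv, ← map_mul, ← map_mul, mul_comm c t', mul_assoc, mul_inv_cancel, mul_one]
  have hassoc : ∀ a b c d e : Wreath 2 k, a * b * c * (d * e) = a * (b * c * d) * e := by
    intro a b c d e; group
  conv_lhs => rw [← inl_left_mul_inr_right γ]
  rw [mul_inv_rev, hassoc, ← map_inv inr γ.right, ← inl_aut, hcomm]

lemma Lfun_shift (y : Fin k → ℤ) (s : Multiplicative (Lamp 2 k)) :
    Lfun φ (lampShift 2 k (ofAdd y) s)
      = lampShift 2 k (ofAdd (Bmap φ y)) (Lfun φ s) := by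
  apply inl_injective (φ := lampShift 2 k)
  rw [← inl_Lfun]
  conv_lhs => rw [inl_aut]
  rw [map_mul, map_mul, map_inv, map_inv, inl_Lfun, conj_inl]
  rw [← rightHom_eq_right, rightHom_phi_inr]

/-- monomial in `Rk k` -/
noncomputable def sgl (k : ℕ) (y : Fin k → ℤ) : Rk k := AddMonoidAlgebra.single y 1

/-- `φ'` written additively as a map `Rk k → Rk k`. -/
noncomputable def ell : Rk k →+ Rk k :=
  AddMonoidHom.mk' (fun f => AddMonoidAlgebra.ofCoeff (toAdd (Lfun φ (ofAdd f.coeff)))) (by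
    intro f g
    show AddMonoidAlgebra.ofCoeff (toAdd (Lfun φ (ofAdd (f + g).coeff)))
        = AddMonoidAlgebra.ofCoeff (toAdd (Lfun φ (ofAdd f.coeff)))
          + AddMonoidAlgebra.ofCoeff (toAdd (Lfun φ (ofAdd g.coeff)))
    rw [AddMonoidAlgebra.coeff_add, ofAdd_add, Lfun_mul, toAdd_mul, AddMonoidAlgebra.ofCoeff_add])

lemma ell_apply (f : Rk k) : ell φ f = AddMonoidAlgebra.ofCoeff (toAdd (Lfun φ (ofAdd f.coeff))) := rfl

lemma ell_symm_ell (f : Rk k) : ell φ.symm (ell φ f) = f := by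
  rw [ell_apply, ell_apply, AddMonoidAlgebra.coeff_ofCoeff, ofAdd_toAdd, Lfun_symm_Lfun, toAdd_ofAdd,
    AddMonoidAlgebra.ofCoeff_coeff]

lemma shift_single_mul (y : Fin k → ℤ) (f : Rk k) :
    toAdd (lampShift 2 k (ofAdd y) (ofAdd f.coeff)) = (sgl k y * f).coeff := by
  have h1 : toAdd (lampShift 2 k (ofAdd y) (ofAdd f.coeff))
      = Finsupp.equivMapDomain (Equiv.addRight y) f.coeff := by
    simp [lampShift]
  ext x
  rw [h1]
  rw [show sgl k y * f = AddMonoidAlgebra.single y 1 * f from rfl]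
  rw [AddMonoidAlgebra.coeff_single_mul_apply, Finsupp.equivMapDomain_apply, one_mul]
  congr 1
  simp [sub_eq_neg_add, add_comm]

lemma ell_single_mul (y : Fin k → ℤ) (f : Rk k) :
    ell φ (sgl k y * f) = sgl k (Bmap φ y) * ell φ f := by
  apply AddMonoidAlgebra.coeff_injective
  rw [ell_apply, AddMonoidAlgebra.coeff_ofCoeff, ← shift_single_mul y f,
    ← shift_single_mul (Bmap φ y) (ell φ f), ofAdd_toAdd, Lfun_shift, ell_apply,
    AddMonoidAlgebra.coeff_ofCoeff, ofAdd_toAdd]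

lemma ell_single (y : Fin k → ℤ) :
    ell φ (sgl k y) = sgl k (Bmap φ y) * ell φ 1 := by
  conv_lhs => rw [show sgl k y = sgl k y * 1 from (mul_one _).symm]
  exact ell_single_mul φ y 1


lemma eq_sum_sgl (f : Rk k) : f = ∑ a ∈ f.coeff.support, sgl k a := by
  conv_lhs => rw [← AddMonoidAlgebra.sum_coeff_single f]
  show (∑ a ∈ f.coeff.support, AddMonoidAlgebra.single a (f.coeff a)) = ∑ a ∈ f.coeff.support, sgl k a
  apply Finset.sum_congr rfl
  intro a ha
  rw [sgl, zmod2_eq_one (Finsupp.mem_support_iff.mp ha)]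

lemma exists_x0 : ∃ x₀ : Fin k → ℤ, ∀ y : Fin k → ℤ,
    ell φ (sgl k y) = sgl k (Bmap φ y + x₀) := by
  classical
  set u : Rk k := ell φ 1 with hu
  have h1 : ell φ.symm u = 1 := ell_symm_ell φ 1
  have h2 : ell φ.symm u = (∑ a ∈ u.coeff.support, sgl k (Bmap φ.symm a)) * ell φ.symm 1 := by
    conv_lhs => rw [eq_sum_sgl u]
    rw [map_sum, Finset.sum_mul]
    apply Finset.sum_congr rfl
    intro a _
    exact ell_single φ.symm a
  have h3 : (∑ a ∈ u.coeff.support, sgl k (Bmap φ.symm a)) * ell φ.symm 1 = 1 := by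
    rw [← h2, h1]
  letI : WellFoundedLT (Fin k) := inferInstance
  haveI : IsOrderedAddMonoid (Lex (Fin k → ℤ)) := inferInstance
  obtain ⟨c, hc⟩ := eq_single_of_mul_eq_one (A := Lex (Fin k → ℤ)) h3
  have h4 : Finsupp.mapDomain (Bmap φ) (∑ a ∈ u.coeff.support, sgl k (Bmap φ.symm a)).coeff
      = u.coeff := by
    rw [AddMonoidAlgebra.coeff_sum, Finsupp.mapDomain_finset_sum]
    conv_rhs => rw [eq_sum_sgl u, AddMonoidAlgebra.coeff_sum]
    apply Finset.sum_congr rfl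
    intro a _
    rw [sgl, AddMonoidAlgebra.coeff_single, Finsupp.mapDomain_single, sgl,
      AddMonoidAlgebra.coeff_single]
    congr 1
    have := Bmap_symm_Bmap φ.symm a
    rwa [MulEquiv.symm_symm] at this
  have h5 : u = AddMonoidAlgebra.single (Bmap φ c) (1 : ZMod 2) := by
    apply AddMonoidAlgebra.coeff_injective
    rw [← h4, hc, AddMonoidAlgebra.coeff_single, AddMonoidAlgebra.coeff_single]
    exact Finsupp.mapDomain_single
  refine ⟨Bmap φ c, fun y => ?_⟩
  rw [ell_single φ y, ← hu, h5]
  rw [sgl, sgl, AddMonoidAlgebra.single_mul_single, one_mul]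

lemma phi_inl_delta (x₀ : Fin k → ℤ)
    (hx₀ : ∀ y : Fin k → ℤ, ell φ (sgl k y) = sgl k (Bmap φ y + x₀)) (y : Fin k → ℤ) :
    φ (inl (lampDelta 2 k y)) = inl (lampDelta 2 k (Bmap φ y + x₀)) := by
  have h1 : lampDelta 2 k y = ofAdd (sgl k y).coeff := rfl
  have h2 : lampDelta 2 k (Bmap φ y + x₀) = ofAdd (sgl k (Bmap φ y + x₀)).coeff := rfl
  rw [h1, h2, inl_Lfun]
  congr 1
  rw [← hx₀ y, ell_apply, AddMonoidAlgebra.coeff_ofCoeff]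
  exact (ofAdd_toAdd _).symm

lemma delta_inj {x y : Fin k → ℤ}
    (h : (inl (lampDelta 2 k x) : Wreath 2 k) = inl (lampDelta 2 k y)) : x = y := by
  have h1 : lampDelta 2 k x = lampDelta 2 k y := inl_injective h
  have h2 : (Finsupp.single x (1 : ZMod 2)) = Finsupp.single y 1 :=
    Multiplicative.ofAdd.injective h1
  exact (Finsupp.single_left_inj one_ne_zero).mp h2

end Stmt7Aux


/-- For any automorphism `φ` of `ℤ_2 wr ℤ^k`, the restriction `φ'` to `Σ` permutes the
`δ_x`'s; there is a unique `x₀` with `φ'(δ_0) = δ_{x₀}`, and then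
`φ'(δ_y) = δ_{φ̄(y) + x₀}` for the induced automorphism `φ̄` of `ℤ^k`. -/
theorem stmt7 (k : ℕ) (hk : 1 ≤ k) (φ : Wreath 2 k ≃* Wreath 2 k) :
    (∃ σ : (Fin k → ℤ) ≃ (Fin k → ℤ),
      ∀ x : Fin k → ℤ, φ (SemidirectProduct.inl (lampDelta 2 k x))
        = SemidirectProduct.inl (lampDelta 2 k (σ x))) ∧
    (∃! x₀ : Fin k → ℤ,
      φ (SemidirectProduct.inl (lampDelta 2 k 0))
        = SemidirectProduct.inl (lampDelta 2 k x₀)) ∧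
    (∀ (B : (Fin k → ℤ) ≃+ (Fin k → ℤ)) (x₀ : Fin k → ℤ),
      (∀ γ : Wreath 2 k, Multiplicative.toAdd (SemidirectProduct.rightHom (φ γ))
          = B (Multiplicative.toAdd (SemidirectProduct.rightHom γ))) →
      φ (SemidirectProduct.inl (lampDelta 2 k 0))
        = SemidirectProduct.inl (lampDelta 2 k x₀) →
      ∀ y : Fin k → ℤ, φ (SemidirectProduct.inl (lampDelta 2 k y))
        = SemidirectProduct.inl (lampDelta 2 k (B y + x₀))) := by
  obtain ⟨x₀, hx₀⟩ := Stmt7Aux.exists_x0 φ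
  have hδ : ∀ y, φ (SemidirectProduct.inl (lampDelta 2 k y))
      = SemidirectProduct.inl (lampDelta 2 k (Stmt7Aux.Bmap φ y + x₀)) :=
    Stmt7Aux.phi_inl_delta φ x₀ hx₀
  have hB2B := Stmt7Aux.Bmap_symm_Bmap φ
  have hBB2 : ∀ z, Stmt7Aux.Bmap φ (Stmt7Aux.Bmap φ.symm z) = z := by
    intro z
    have := Stmt7Aux.Bmap_symm_Bmap φ.symm z
    rwa [MulEquiv.symm_symm] at this
  refine ⟨⟨⟨fun x => Stmt7Aux.Bmap φ x + x₀, fun z => Stmt7Aux.Bmap φ.symm (z - x₀),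
      ?_, ?_⟩, fun x => hδ x⟩, ?_, ?_⟩
  · intro x
    simp only [add_sub_cancel_right, hB2B]
  · intro z
    simp only [hBB2, sub_add_cancel]
  · exact ⟨Stmt7Aux.Bmap φ 0 + x₀, hδ 0, fun y hy =>
      Stmt7Aux.delta_inj (hy.symm.trans (hδ 0))⟩
  · intro B x₀' hBγ hx₀' y
    have hBy : ∀ z, (B z : Fin k → ℤ) = Stmt7Aux.Bmap φ z := by
      intro z
      have h := hBγ (SemidirectProduct.inr (Multiplicative.ofAdd z))
      rw [SemidirectProduct.rightHom_inr, toAdd_ofAdd] at h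
      exact h.symm
    have h0 : x₀' = Stmt7Aux.Bmap φ 0 + x₀ := Stmt7Aux.delta_inj (hx₀'.symm.trans (hδ 0))
    have hB0 : Stmt7Aux.Bmap φ 0 = 0 := by rw [← hBy 0, map_zero]
    rw [hBy y, h0, hB0, zero_add]
    exact hδ y
end

section
/- Let k ≥ 1, let A ∈ GL(k, ℤ), let x₀ ∈ ℤ^k, and let φ' be the additive automorphism of Σ = ⨁_{x ∈ ℤ^k} ℤ/2ℤ defined by φ'(δ_y) = δ_{A y + x₀} for all y ∈ ℤ^k. If δ_{x₁} and δ_{x₂} lie in the same Reidemeister class of φ' (equivalently, δ_{x₁} − δ_{x₂} lies in the range of id − φ'), then there exists an integer t ≥ 0 such that A^t x₁ + A^{t−1} x₀ + ⋯ + A x₀ + x₀ = x₂ or A^t x₂ + A^{t−1} x₀ + ⋯ + A x₀ + x₀ = x₁. -/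
/-- If `δ_{x₁} - δ_{x₂}` lies in the range of `id - φ'` where `φ'(δ_y) = δ_{A y + x₀}`
on `Σ = ⨁_{ℤ^k} ℤ/2ℤ`, then `A^t x₁ + A^{t-1} x₀ + ⋯ + x₀ = x₂` or
`A^t x₂ + A^{t-1} x₀ + ⋯ + x₀ = x₁` for some `t ≥ 0`. -/
theorem stmt8 (k : ℕ) (hk : 1 ≤ k) (A : AddAut (Fin k → ℤ)) (x₀ : Fin k → ℤ)
    (x₁ x₂ : Fin k → ℤ)
    (h : ∃ f : (Fin k → ℤ) →₀ ZMod 2,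
      Finsupp.single x₁ 1 - Finsupp.single x₂ 1
        = f - Finsupp.equivMapDomain (A.toEquiv.trans (Equiv.addRight x₀)) f) :
    ∃ t : ℕ,
      (t • A) x₁ + ∑ i ∈ Finset.range t, (i • A) x₀ = x₂ ∨
      (t • A) x₂ + ∑ i ∈ Finset.range t, (i • A) x₀ = x₁ := by
  classical
  obtain ⟨f, hf⟩ := h
  set ψ : Equiv.Perm (Fin k → ℤ) := A.toEquiv.trans (Equiv.addRight x₀) with hψdef
  have hψapp : ∀ y, ψ y = A y + x₀ := fun y => rfl
  have hpow : ∀ (t : ℕ) (y), (ψ ^ t) y = (t • A) y + ∑ i ∈ Finset.range t, (i • A) x₀ := by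
    intro t
    induction t with
    | zero => intro y; simp
    | succ t ih =>
      intro y
      rw [pow_succ, Equiv.Perm.mul_apply, hψapp, ih, Finset.sum_range_succ, map_add]
      have h1 : (t • A) (A y) = ((t + 1) • A) y := by
        rw [succ_nsmul, AddAut.add_apply]
      rw [h1]
      abel
  by_contra hcon
  push_neg at hcon
  have P1 : ∀ t : ℕ, (ψ ^ t) x₁ ≠ x₂ := fun t => by rw [hpow]; exact (hcon t).1
  have P2 : ∀ t : ℕ, (ψ ^ t) x₂ ≠ x₁ := fun t => by rw [hpow]; exact (hcon t).2
  have Q : ∀ n : ℤ, (ψ ^ n) x₁ ≠ x₂ := by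
    intro n hn
    rcases le_or_gt 0 n with hn0 | hn0
    · lift n to ℕ using hn0
      exact P1 n (by rwa [zpow_natCast] at hn)
    · apply P2 (-n).toNat
      have h2 : (ψ ^ ((-n).toNat : ℤ)) x₂ = x₁ := by
        rw [← hn, ← Equiv.Perm.mul_apply, ← zpow_add]
        rw [Int.toNat_of_nonneg (by omega)]
        simp
      rwa [zpow_natCast] at h2
  have E : ∀ x, f x - f (ψ⁻¹ x) =
      (if x = x₁ then (1 : ZMod 2) else 0) - (if x = x₂ then 1 else 0) := by
    intro x
    have h1 := DFunLike.congr_fun hf x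
    simp only [Finsupp.sub_apply, Finsupp.single_apply, Finsupp.equivMapDomain_apply] at h1
    rw [Equiv.Perm.inv_def, ← h1]
    congr 1 <;> simp [eq_comm]
  have hrec : ∀ n : ℤ, f ((ψ ^ n) x₁) - f ((ψ ^ (n - 1)) x₁)
      = (if (ψ ^ n) x₁ = x₁ then (1 : ZMod 2) else 0) := by
    intro n
    have h1 := E ((ψ ^ n) x₁)
    have h2 : ψ⁻¹ ((ψ ^ n) x₁) = (ψ ^ (n - 1)) x₁ := by
      rw [← Equiv.Perm.mul_apply, ← zpow_neg_one, ← zpow_add]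
      ring_nf
    rw [h2] at h1
    simpa [Q n] using h1
  by_cases hper : ∃ n : ℕ, 0 < n ∧ (ψ ^ n) x₁ = x₁
  · -- periodic case
    obtain ⟨hn_pos, hn_fix⟩ := Nat.find_spec hper
    set n := Nat.find hper with hn_def
    have hmin : ∀ i : ℕ, 0 < i → i < n → (ψ ^ i) x₁ ≠ x₁ := fun i h1 h2 hi =>
      Nat.find_min hper h2 ⟨h1, hi⟩
    have tele := Finset.sum_range_sub (fun i => f ((ψ ^ ((i : ℤ) - 1)) x₁)) n
    have L : ∑ i ∈ Finset.range n,
        (f ((ψ ^ (((i + 1 : ℕ) : ℤ) - 1)) x₁) - f ((ψ ^ ((i : ℤ) - 1)) x₁))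
        = ∑ i ∈ Finset.range n, (if (ψ ^ i) x₁ = x₁ then (1 : ZMod 2) else 0) := by
      refine Finset.sum_congr rfl fun i _ => ?_
      have e : ((i + 1 : ℕ) : ℤ) - 1 = (i : ℤ) := by push_cast; ring
      rw [e, ← zpow_natCast ψ i]
      exact hrec i
    have R : (ψ ^ ((n : ℤ) - 1)) x₁ = (ψ ^ (((0 : ℕ) : ℤ) - 1)) x₁ := by
      have e : (n : ℤ) - 1 = -1 + n := by ring
      rw [e, zpow_add, Equiv.Perm.mul_apply, zpow_natCast, hn_fix]
      norm_num
    rw [L, R, sub_self] at tele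
    have hone : ∑ i ∈ Finset.range n, (if (ψ ^ i) x₁ = x₁ then (1 : ZMod 2) else 0) = 1 := by
      rw [Finset.sum_eq_single 0]
      · simp
      · intro i hi hne
        simp [hmin i (Nat.pos_of_ne_zero hne) (Finset.mem_range.mp hi)]
      · intro h0; exact absurd (Finset.mem_range.mpr hn_pos) h0
    rw [hone] at tele
    exact one_ne_zero tele
  · -- aperiodic case
    push_neg at hper
    have key : ∀ m n : ℤ, m < n → (ψ ^ m) x₁ ≠ (ψ ^ n) x₁ := by
      intro m n hmn heq
      apply hper (n - m).toNat (by omega)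
      have h2 := congrArg (fun z => (ψ ^ (-m)) z) heq
      simp only [← Equiv.Perm.mul_apply, ← zpow_add] at h2
      have e1 : -m + m = 0 := by ring
      have e2 : -m + n = n - m := by ring
      rw [e1, e2] at h2
      rw [← zpow_natCast, Int.toNat_of_nonneg (by omega)]
      simpa using h2.symm
    have hfin : {n : ℤ | f ((ψ ^ n) x₁) ≠ 0}.Finite := by
      have hsub : {n : ℤ | f ((ψ ^ n) x₁) ≠ 0} ⊆ (fun n : ℤ => (ψ ^ n) x₁) ⁻¹' ↑f.support := by
        intro n hn; simpa [Finsupp.mem_support_iff] using hn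
      refine Set.Finite.subset (Set.Finite.preimage ?_ f.support.finite_toSet) hsub
      intro a _ b _ hab
      by_contra hne
      rcases lt_or_gt_of_ne hne with h' | h'
      · exact key a b h' hab
      · exact key b a h' hab.symm
    have hne0 : ∀ n : ℤ, n ≠ 0 → f ((ψ ^ n) x₁) = f ((ψ ^ (n - 1)) x₁) := by
      intro n hn
      have h1 := hrec n
      have h2 : (ψ ^ n) x₁ ≠ x₁ := by
        intro he
        rcases lt_trichotomy n 0 with h' | h' | h'
        · exact key n 0 h' (by simpa using he)
        · exact hn h'
        · exact key 0 n h' (by simpa using he.symm)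
      rw [if_neg h2] at h1
      exact sub_eq_zero.mp h1
    have hc1 : ∀ m : ℕ, f ((ψ ^ ((m : ℕ) : ℤ)) x₁) = f ((ψ ^ (0 : ℤ)) x₁) := by
      intro m
      induction m with
      | zero => norm_num
      | succ m ih =>
        have e : ((m + 1 : ℕ) : ℤ) = (m : ℤ) + 1 := by push_cast; ring
        have h1 := hne0 ((m : ℤ) + 1) (by omega)
        have e2 : (m : ℤ) + 1 - 1 = (m : ℤ) := by ring
        rw [e, h1, e2, ih]
    have hc2 : ∀ m : ℕ, f ((ψ ^ (-((m : ℕ) : ℤ) - 1)) x₁) = f ((ψ ^ (-1 : ℤ)) x₁) := by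
      intro m
      induction m with
      | zero => norm_num
      | succ m ih =>
        have h1 := hne0 (-((m : ℕ) : ℤ) - 1) (by omega)
        have e : -((m : ℕ) : ℤ) - 1 - 1 = -((m + 1 : ℕ) : ℤ) - 1 := by push_cast; ring
        rw [e] at h1
        rw [← h1]; exact ih
    have hstep := hrec 0
    rw [if_pos (by simp)] at hstep
    obtain ⟨b, hb⟩ := hfin.bddAbove
    obtain ⟨a, ha⟩ := hfin.bddBelow
    set c : ℤ := max b (-a - 1) + 1 with hc_def
    set m : ℕ := c.toNat with hm_def
    have hcm : c ≤ (m : ℤ) := Int.self_le_toNat c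
    have hm1 : b < (m : ℤ) := by have := le_max_left b (-a - 1); omega
    have hm2 : -(m : ℤ) - 1 < a := by have := le_max_right b (-a - 1); omega
    have hv1 : f ((ψ ^ ((m : ℕ) : ℤ)) x₁) = 0 := by
      by_contra hne
      have : ((m : ℕ) : ℤ) ≤ b := hb hne
      omega
    have hv2 : f ((ψ ^ (-((m : ℕ) : ℤ) - 1)) x₁) = 0 := by
      by_contra hne
      have : a ≤ -((m : ℕ) : ℤ) - 1 := ha hne
      omega
    have z0 : f ((ψ ^ (0 : ℤ)) x₁) = 0 := by rw [← hc1 m, hv1]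
    have z1 : f ((ψ ^ (-1 : ℤ)) x₁) = 0 := by rw [← hc2 m, hv2]
    rw [show (0 : ℤ) - 1 = -1 by ring, z0, z1] at hstep
    norm_num at hstep
end

section
/- For every k ≥ 1, the restricted wreath product ℤ_2 wr ℤ^k has property R_∞: every automorphism φ of ℤ_2 wr ℤ^k has infinitely many Reidemeister classes, i.e. R(φ) = ∞. -/
open Finsupp Multiplicative SemidirectProduct

lemma infinite_RC {G X : Type*} [Group G] (φ : G ≃* G) (F : G → X)
    (hinv : ∀ g h : G, F (h * g * (φ h)⁻¹) = F g) (hinf : (Set.range F).Infinite) :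
    Infinite (ReidemeisterClasses φ) := by
  let F' : ReidemeisterClasses φ → X :=
    Quot.lift F (by rintro x y ⟨h, rfl⟩; exact (hinv x h).symm)
  rw [← not_finite_iff_infinite]
  intro hfin
  have : (Set.range F').Finite := Set.finite_range F'
  refine hinf.mono ?_ this
  rintro _ ⟨g, rfl⟩
  exact ⟨Quot.mk _ g, rfl⟩

-- chi
noncomputable def chi (k : ℕ) : (Fin k → ℤ) →+ ℝ where
  toFun v := ∑ i, (v i : ℝ) * (liouvilleNumber 3) ^ (i : ℕ)
  map_zero' := by simp
  map_add' v w := by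
    rw [← Finset.sum_add_distrib]
    refine Finset.sum_congr rfl fun i _ => by simp only [Pi.add_apply]; push_cast; ring

lemma chi_inj (k : ℕ) : Function.Injective (chi k) := by
  rw [injective_iff_map_eq_zero]
  intro v hv
  by_contra hv0
  obtain ⟨i0, hi0⟩ : ∃ i, v i ≠ 0 := by
    by_contra h; push_neg at h; exact hv0 (funext h)
  have htr : Transcendental ℤ (liouvilleNumber 3) :=
    transcendental_liouvilleNumber (by norm_num)
  refine htr ⟨∑ i : Fin k, Polynomial.C (v i) * Polynomial.X ^ (i : ℕ), ?_, ?_⟩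
  · intro h0
    have : (∑ i : Fin k, Polynomial.C (v i) * Polynomial.X ^ (i : ℕ)).coeff (i0 : ℕ) = v i0 := by
      rw [Polynomial.finset_sum_coeff]
      rw [Finset.sum_eq_single i0]
      · simp
      · intro b _ hb
        rw [Polynomial.coeff_C_mul, Polynomial.coeff_X_pow, if_neg (by simpa [Fin.val_injective.eq_iff, eq_comm] using hb)]
        ring
      · simp
    rw [h0] at this; simp at this; exact hi0 this.symm
  · have := hv
    simp only [chi, AddMonoidHom.coe_mk, ZeroHom.coe_mk] at this
    rw [map_sum]
    simpa [Polynomial.aeval_C, mul_comm] using this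

noncomputable def sh {k : ℕ} (y : Fin k → ℤ) (s : Lamp 2 k) : Lamp 2 k :=
  Finsupp.domCongr (α := Fin k → ℤ) (Equiv.addRight y) s

lemma sh_apply {k : ℕ} (y : Fin k → ℤ) (s : Lamp 2 k) (m : Fin k → ℤ) :
    sh y s m = s (m - y) := by
  simp [sh, Finsupp.domCongr_apply, Finsupp.equivMapDomain_apply, sub_eq_add_neg]

lemma sh_single {k : ℕ} (y x : Fin k → ℤ) (c : ZMod 2) :
    sh y (Finsupp.single x c) = Finsupp.single (x + y) c := by
  simp [sh, Finsupp.domCongr_apply]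

lemma zmod2_cases : ∀ c : ZMod 2, c = 0 ∨ c = 1 := by decide

lemma corner {k : ℕ} (f : (Fin k → ℤ) → ℝ) (hadd : ∀ a b, f (a + b) = f a + f b)
    (hinj : Function.Injective f)
    (e' : (Fin k → ℤ) → (Fin k → ℤ)) (he' : Function.Injective e')
    (u σ : Lamp 2 k) (hu0 : u ≠ 0) (hσ0 : σ ≠ 0)
    (h : (σ.sum fun x c => c • sh (e' x) u) = single 0 1) :
    ∃ xs as, xs ∈ σ.support ∧ as ∈ u.support ∧ e' xs + as = 0 ∧
      (∀ x ∈ σ.support, f (e' x) ≤ f (e' xs)) ∧ (∀ a ∈ u.support, f a ≤ f as) := by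
  have hsub : ∀ a b, f (a - b) = f a - f b := by
    intro a b; have := hadd (a - b) b; simp only [sub_add_cancel] at this; linarith
  obtain ⟨xs, hxsS, hxsmax⟩ :=
    Finset.exists_max_image σ.support (fun x => f (e' x)) (Finsupp.support_nonempty_iff.2 hσ0)
  obtain ⟨as, hasU, hasmax⟩ :=
    Finset.exists_max_image u.support f (Finsupp.support_nonempty_iff.2 hu0)
  refine ⟨xs, as, hxsS, hasU, ?_, hxsmax, hasmax⟩
  have happ : (σ.sum fun x c => c • sh (e' x) u) (e' xs + as) = σ xs * u as := by
    rw [Finsupp.sum_apply]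
    rw [Finsupp.sum]
    rw [Finset.sum_eq_single xs]
    · rw [Finsupp.smul_apply, sh_apply, smul_eq_mul]
      congr 2
      abel
    · intro x hxS hne
      rw [Finsupp.smul_apply, sh_apply, smul_eq_mul]
      have : u (e' xs + as - e' x) = 0 := by
        by_contra hmem
        have hmem' : (e' xs + as - e' x) ∈ u.support := Finsupp.mem_support_iff.2 hmem
        have h1 : f (e' xs + as - e' x) ≤ f as := hasmax _ hmem'
        rw [hsub, hadd] at h1
        have h2 : f (e' x) ≤ f (e' xs) := hxsmax _ hxS
        have : f (e' x) = f (e' xs) := by linarith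
        exact hne (he' (hinj this))
      rw [this, mul_zero]
    · intro hxs; exact absurd hxsS hxs
  haveI : Fact (Nat.Prime 2) := ⟨Nat.prime_two⟩
  have hne : σ xs * u as ≠ 0 :=
    mul_ne_zero (Finsupp.mem_support_iff.1 hxsS) (Finsupp.mem_support_iff.1 hasU)
  rw [h] at happ
  rw [Finsupp.single_apply] at happ
  by_contra hne0
  rw [if_neg (fun hh => hne0 hh.symm)] at happ
  exact hne happ.symm

lemma unit_single {k : ℕ} (e' : (Fin k → ℤ) → (Fin k → ℤ)) (he' : Function.Injective e')
    (u σ : Lamp 2 k)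
    (h : (σ.sum fun x c => c • sh (e' x) u) = single 0 1) :
    ∃ a, u = Finsupp.single a 1 := by
  have hone : (single (0 : Fin k → ℤ) (1 : ZMod 2)) ≠ 0 := by
    simp [Finsupp.single_eq_zero]
  have hu0 : u ≠ 0 := by
    rintro rfl
    rw [Finsupp.sum, Finset.sum_eq_zero (fun x _ => by simp [sh])] at h
    exact hone h.symm
  have hσ0 : σ ≠ 0 := by
    rintro rfl
    rw [Finsupp.sum_zero_index] at h
    exact hone h.symm
  set f : (Fin k → ℤ) → ℝ := fun v => chi k v with hf
  have hadd : ∀ a b, f (a + b) = f a + f b := fun a b => by simp [hf, map_add]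
  have hinj : Function.Injective f := chi_inj k
  obtain ⟨xP, aP, hxP, haP, hzP, hPe, hPa⟩ := corner f hadd hinj e' he' u σ hu0 hσ0 h
  obtain ⟨xM, aM, hxM, haM, hzM, hMe, hMa⟩ := corner (fun v => -(f v))
    (fun a b => by rw [hadd]; ring) (fun a b hab => hinj (by dsimp at hab; linarith)) e' he' u σ hu0 hσ0 h
  have f0 : f 0 = 0 := by have := hadd 0 0; simp at this; linarith
  have h1 : f (e' xP) + f aP = 0 := by rw [← hadd, hzP, f0]
  have h2 : f (e' xM) + f aM = 0 := by rw [← hadd, hzM, f0]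
  have l3 : f (e' xM) ≤ f (e' xP) := hPe xM hxM
  refine ⟨aP, ?_⟩
  have hsub : u.support ⊆ {aP} := by
    intro a ha
    have l1 : f a ≤ f aP := hPa a ha
    have l2 : -f a ≤ -f aM := hMa a ha
    have : f a = f aP := by linarith
    exact Finset.mem_singleton.2 (hinj this)
  have := Finsupp.support_subset_singleton.1 hsub
  rw [this]
  congr 1
  have hne : u aP ≠ 0 := Finsupp.mem_support_iff.1 haP
  rcases zmod2_cases (u aP) with h0 | h1
  · exact absurd h0 hne
  · exact h1

variable {k : ℕ}

/-- natAbs gcd of coordinates -/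
def gcdv {k : ℕ} (v : Fin k → ℤ) : ℕ := (Finset.univ.gcd fun i => v i).natAbs

lemma dvd_all_iff_smul (g : ℤ) (v : Fin k → ℤ) : (∀ i, g ∣ v i) ↔ ∃ v', v = g • v' := by
  constructor
  · intro h
    refine ⟨fun i => v i / g, funext fun i => ?_⟩
    simp only [Pi.smul_apply, smul_eq_mul]
    exact (Int.mul_ediv_cancel' (h i)).symm
  · rintro ⟨v', rfl⟩ i
    exact ⟨v' i, rfl⟩

lemma gcdv_map (E E' : (Fin k → ℤ) →+ (Fin k → ℤ)) (hEE' : ∀ v, E' (E v) = v)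
    (v : Fin k → ℤ) : gcdv (E v) = gcdv v := by
  have key : ∀ (F : (Fin k → ℤ) →+ (Fin k → ℤ)) (g : ℤ) (w : Fin k → ℤ),
      (∀ i, g ∣ w i) → ∀ i, g ∣ F w i := by
    intro F g w hg
    obtain ⟨w', rfl⟩ := (dvd_all_iff_smul g w).1 hg
    rw [map_zsmul]
    intro i; exact ⟨F w' i, rfl⟩
  have h1 : (Finset.univ.gcd fun i => v i) ∣ (Finset.univ.gcd fun i => E v i) := by
    refine Finset.dvd_gcd fun i _ => ?_
    exact key E _ v (fun j => Finset.gcd_dvd (Finset.mem_univ j)) i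
  have h2 : (Finset.univ.gcd fun i => E v i) ∣ (Finset.univ.gcd fun i => v i) := by
    refine Finset.dvd_gcd fun i _ => ?_
    have := key E' _ (E v) (fun j => Finset.gcd_dvd (Finset.mem_univ j)) i
    rwa [hEE'] at this
  exact Nat.dvd_antisymm (Int.natAbs_dvd_natAbs.2 h2) (Int.natAbs_dvd_natAbs.2 h1)

lemma gcdv_big {d : ℤ} (hd : d ≠ 0) (hk : 1 ≤ k) (w : Fin k → ℤ) (n : ℕ) :
    ∃ x : Fin k → ℤ, n ≤ gcdv (d • x - w) := by
  obtain ⟨P, hPn, hP⟩ := Nat.exists_infinite_primes (max (n+1) (d.natAbs + 1))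
  haveI : Fact (Nat.Prime P) := ⟨hP⟩
  haveI : NeZero P := ⟨hP.ne_zero⟩
  have hPd : ¬ (P : ℤ) ∣ d := by
    intro hdvd
    have h2 := Int.natAbs_dvd_natAbs.2 hdvd
    simp only [Int.natAbs_natCast] at h2
    have := Nat.le_of_dvd (Int.natAbs_pos.2 hd) h2
    omega
  have hdP : (d : ZMod P) ≠ 0 := by
    rwa [Ne, ZMod.intCast_zmod_eq_zero_iff_dvd]
  set x0 : Fin k → ℤ := fun i => (((d : ZMod P)⁻¹ * (w i : ZMod P)).val : ℤ) with hx0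
  have hsol : ∀ i, (P : ℤ) ∣ (d • x0 - w) i := by
    intro i
    have h3 : (d • x0 - w) i = d * x0 i - w i := by simp
    rw [h3, ← ZMod.intCast_zmod_eq_zero_iff_dvd]
    push_cast
    rw [hx0]
    push_cast
    rw [ZMod.natCast_val, ZMod.cast_id', id_eq]
    rw [← mul_assoc, mul_inv_cancel₀ hdP, one_mul, sub_self]
  have i0 : Fin k := ⟨0, hk⟩
  obtain ⟨x, hxdvd, hxne⟩ :
      ∃ x : Fin k → ℤ, (∀ i, (P : ℤ) ∣ (d • x - w) i) ∧ d • x - w ≠ 0 := by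
    have hexp : d • (x0 + (P:ℤ) • Pi.single i0 1) - w
        = (d • x0 - w) + (d * (P:ℤ)) • Pi.single i0 1 := by
      ext j; simp [mul_smul]; ring
    by_cases h0 : d • x0 - w = 0
    · refine ⟨x0 + (P : ℤ) • Pi.single i0 1, fun i => ?_, ?_⟩
      · rw [hexp]
        refine dvd_add (hsol i) ?_
        refine ⟨d * Pi.single (M := fun _ : Fin k => ℤ) i0 1 i, ?_⟩
        simp only [Pi.smul_apply, smul_eq_mul]
        ring
      · intro hzero
        rw [hexp, h0, zero_add] at hzero
        have := congrFun hzero i0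
        simp [Pi.single_apply] at this
        rcases this with h | h
        · exact hd h
        · exact hP.ne_zero (by exact_mod_cast h)
    · exact ⟨x0, hsol, h0⟩
  refine ⟨x, ?_⟩
  set g := Finset.univ.gcd fun i => (d • x - w) i with hg
  have hPg : (P : ℤ) ∣ g := Finset.dvd_gcd fun i _ => hxdvd i
  have hgne : g ≠ 0 := by
    intro h0
    apply hxne
    ext i
    have := Finset.gcd_dvd (f := fun i => (d • x - w) i) (Finset.mem_univ i)
    rw [← hg, h0] at this
    simpa using this
  have hdvdP : P ∣ gcdv (d • x - w) := by
    have h4 := Int.natAbs_dvd_natAbs.2 hPg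
    simpa [gcdv, hg] using h4
  have hpos : 0 < gcdv (d • x - w) :=
    Nat.pos_of_ne_zero (by simpa [gcdv, hg, Int.natAbs_eq_zero] using hgne)
  have := Nat.le_of_dvd hpos hdvdP
  omega

section Structure
variable {k : ℕ}

lemma toAdd_lampShift (y : Multiplicative (Fin k → ℤ)) (s : Multiplicative (Lamp 2 k)) :
    toAdd ((lampShift 2 k y) s) = sh (toAdd y) (toAdd s) := rfl

lemma zmod2_add_self : ∀ c : ZMod 2, c + c = 0 := by decide

lemma lamp_sq_one (s : Multiplicative (Lamp 2 k)) : s * s = 1 := by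
  have : toAdd (s * s) = toAdd (1 : Multiplicative (Lamp 2 k)) := by
    rw [toAdd_mul, toAdd_one]
    ext a
    simp [zmod2_add_self]
  exact toAdd.injective this

lemma mult_eq_one_of_toAdd {M : Type*} [AddMonoid M] {m : Multiplicative M}
    (h : toAdd m = 0) : m = 1 := by
  have : m = ofAdd (toAdd m) := rfl
  rw [this, h]; rfl

lemma right_eq_one_of_sq {g : Wreath 2 k} (h : g * g = 1) : g.right = 1 := by
  have h1 : g.right * g.right = 1 := by
    have := congrArg SemidirectProduct.right h
    simpa using this
  refine mult_eq_one_of_toAdd ?_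
  have h2 : toAdd g.right + toAdd g.right = 0 := by
    have := congrArg toAdd h1
    simpa using this
  funext i
  have h3 : toAdd g.right i + toAdd g.right i = 0 := by simpa using congrFun h2 i
  show toAdd g.right i = 0
  omega

lemma eq_inl_of_right_eq_one {g : Wreath 2 k} (h : g.right = 1) : g = inl g.left := by
  conv_lhs => rw [← inl_left_mul_inr_right g]
  rw [h, map_one, mul_one]

variable (φ : Wreath 2 k ≃* Wreath 2 k)

noncomputable def psiM (s : Multiplicative (Lamp 2 k)) : Multiplicative (Lamp 2 k) :=
  (φ (inl s)).left

lemma phi_inl (s : Multiplicative (Lamp 2 k)) : φ (inl s) = inl (psiM φ s) := by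
  have hsq : φ (inl s) * φ (inl s) = 1 := by
    rw [← map_mul, ← map_mul, lamp_sq_one, map_one, map_one]
  have := eq_inl_of_right_eq_one (right_eq_one_of_sq hsq)
  exact this

lemma psiM_mul (s t : Multiplicative (Lamp 2 k)) :
    psiM φ (s * t) = psiM φ s * psiM φ t := by
  have : φ (inl (s * t)) = inl (psiM φ s * psiM φ t) := by
    rw [map_mul, map_mul, phi_inl, phi_inl, ← map_mul]
  rw [phi_inl] at this
  exact inl_injective this

noncomputable def eMM (y : Multiplicative (Fin k → ℤ)) : Multiplicative (Fin k → ℤ) :=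
  (φ (inr y)).right

lemma right_phi (g : Wreath 2 k) : (φ g).right = eMM φ g.right := by
  conv_lhs => rw [← inl_left_mul_inr_right g]
  rw [map_mul, phi_inl, mul_right, right_inl, one_mul, eMM]

lemma eMM_symm_eMM (y : Multiplicative (Fin k → ℤ)) : eMM φ.symm (eMM φ y) = y := by
  have h1 : eMM φ y = (φ (inr y)).right := rfl
  have h2 := right_phi φ.symm (φ (inr y))
  rw [MulEquiv.symm_apply_apply, right_inr] at h2
  rw [h1, ← h2]

noncomputable def eA : (Fin k → ℤ) →+ (Fin k → ℤ) where
  toFun y := toAdd (eMM φ (ofAdd y))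
  map_zero' := by
    show toAdd (eMM φ (ofAdd (0 : Fin k → ℤ))) = 0
    have : eMM φ (ofAdd (0 : Fin k → ℤ)) = 1 := by
      rw [eMM]
      have : ofAdd (0 : Fin k → ℤ) = (1 : Multiplicative (Fin k → ℤ)) := rfl
      rw [this, map_one, map_one, one_right]
    rw [this, toAdd_one]
  map_add' a b := by
    show toAdd (eMM φ (ofAdd (a + b))) = toAdd (eMM φ (ofAdd a)) + toAdd (eMM φ (ofAdd b))
    have : eMM φ (ofAdd (a + b)) = eMM φ (ofAdd a) * eMM φ (ofAdd b) := by
      rw [eMM, eMM, eMM, ← mul_right, ← map_mul, ← map_mul]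
      rfl
    rw [this, toAdd_mul]

lemma eA_symm_eA (v : Fin k → ℤ) : eA φ.symm (eA φ v) = v := by
  simp only [eA, AddMonoidHom.coe_mk, ZeroHom.coe_mk, ofAdd_toAdd, eMM_symm_eMM, toAdd_ofAdd]

lemma eA_inj : Function.Injective (eA φ) := by
  intro a b hab
  have := congrArg (eA φ.symm) hab
  rwa [eA_symm_eA, eA_symm_eA] at this

end Structure

section Structure2
variable {k : ℕ} (φ : Wreath 2 k ≃* Wreath 2 k)

set_option maxHeartbeats 1000000 in
lemma psiM_shift (y : Multiplicative (Fin k → ℤ)) (s : Multiplicative (Lamp 2 k)) :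
    psiM φ ((lampShift 2 k y) s) = (lampShift 2 k (eMM φ y)) (psiM φ s) := by
  have hr : (φ (inr y)).right = eMM φ y := by rw [right_phi, right_inr]
  have hA2 : φ (inr y) = inl (φ (inr y)).left * inr (eMM φ y) := by
    conv_lhs => rw [← inl_left_mul_inr_right (φ (inr y))]
    rw [hr]
  have h1 : (inl (psiM φ ((lampShift 2 k y) s)) : Wreath 2 k)
      = φ (inr y) * inl (psiM φ s) * (φ (inr y))⁻¹ := by
    rw [← phi_inl, inl_aut, map_mul, map_mul, map_inv, phi_inl, map_inv]
  have h2 : (φ (inr y) * inl (psiM φ s) * (φ (inr y))⁻¹ : Wreath 2 k)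
      = inl ((lampShift 2 k (eMM φ y)) (psiM φ s)) := by
    rw [hA2, mul_inv_rev, ← map_inv (inr : Multiplicative (Fin k → ℤ) →* Wreath 2 k),
      ← map_inv (inl : Multiplicative (Lamp 2 k) →* Wreath 2 k)]
    have h3 : (inr (eMM φ y) * inl (psiM φ s) * inr ((eMM φ y)⁻¹) : Wreath 2 k)
        = inl ((lampShift 2 k (eMM φ y)) (psiM φ s)) := (inl_aut (φ := lampShift 2 k) _ _).symm
    calc inl (φ (inr y)).left * inr (eMM φ y) * inl (psiM φ s)
          * (inr ((eMM φ y)⁻¹) * inl (((φ (inr y)).left)⁻¹))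
        = inl (φ (inr y)).left * (inr (eMM φ y) * inl (psiM φ s) * inr ((eMM φ y)⁻¹))
          * inl (((φ (inr y)).left)⁻¹) := by simp only [mul_assoc]
      _ = inl (φ (inr y)).left * inl ((lampShift 2 k (eMM φ y)) (psiM φ s))
          * inl (((φ (inr y)).left)⁻¹) := by rw [h3]
      _ = inl ((φ (inr y)).left * (lampShift 2 k (eMM φ y)) (psiM φ s)
          * ((φ (inr y)).left)⁻¹) := by rw [← map_mul, ← map_mul]
      _ = inl ((lampShift 2 k (eMM φ y)) (psiM φ s)) := by
          rw [mul_comm ((φ (inr y)).left), mul_assoc, mul_inv_cancel, mul_one]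
  exact inl_injective (h1.trans h2)

/-- `u = ψ(δ₀)` additively. -/
noncomputable def uu : Lamp 2 k := toAdd (psiM φ (lampDelta 2 k 0))

/-- additive version of ψ -/
noncomputable def psiA : Lamp 2 k →+ Lamp 2 k where
  toFun s := toAdd (psiM φ (ofAdd s))
  map_zero' := by
    show toAdd (psiM φ (ofAdd (0 : Lamp 2 k))) = 0
    have : φ (inl (ofAdd (0 : Lamp 2 k))) = 1 := by
      have : (inl (ofAdd (0 : Lamp 2 k)) : Wreath 2 k) = 1 := by
        rw [← map_one inl]; rfl
      rw [this, map_one]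
    rw [psiM, this]
    rfl
  map_add' a b := by
    show toAdd (psiM φ (ofAdd (a + b))) = toAdd (psiM φ (ofAdd a)) + toAdd (psiM φ (ofAdd b))
    have : ofAdd (a + b) = ofAdd a * ofAdd b := rfl
    rw [this, psiM_mul, toAdd_mul]

lemma lampDelta_shift (x : Fin k → ℤ) :
    (lampShift 2 k (ofAdd x)) (lampDelta 2 k 0) = lampDelta 2 k x := by
  refine toAdd.injective ?_
  rw [toAdd_lampShift]
  show sh x (Finsupp.single 0 1) = Finsupp.single x 1
  rw [sh_single, zero_add]

lemma psiA_single_one (x : Fin k → ℤ) :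
    psiA φ (Finsupp.single x 1) = sh (eA φ x) (uu φ) := by
  show toAdd (psiM φ (ofAdd (Finsupp.single x 1))) = sh (eA φ x) (uu φ)
  have h1 : (ofAdd (Finsupp.single x (1 : ZMod 2))) = lampDelta 2 k x := rfl
  rw [h1, ← lampDelta_shift, psiM_shift, toAdd_lampShift]
  rfl

lemma exists_sigma : ∃ σ : Lamp 2 k, psiA φ σ = Finsupp.single 0 1 := by
  obtain ⟨g, hg⟩ := φ.surjective (inl (lampDelta 2 k 0))
  have hsq : g * g = 1 := by
    apply φ.injective
    rw [map_mul, hg, map_one, ← map_mul, lamp_sq_one, map_one]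
  have hgl : g = inl g.left := eq_inl_of_right_eq_one (right_eq_one_of_sq hsq)
  refine ⟨toAdd g.left, ?_⟩
  show toAdd (psiM φ (ofAdd (toAdd g.left))) = Finsupp.single 0 1
  rw [ofAdd_toAdd, psiM, ← hgl, hg, left_inl]
  rfl

lemma psiA_sum (σ : Lamp 2 k) :
    psiA φ σ = σ.sum fun x c => c • sh (eA φ x) (uu φ) := by
  conv_lhs => rw [← Finsupp.sum_single σ, map_finsuppSum]
  refine Finsupp.sum_congr fun x hx => ?_
  rcases zmod2_cases (σ x) with h | h
  · rw [h]; simp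
  · rw [h, one_smul, psiA_single_one]

noncomputable def TT : (Fin k → ℤ) →+ (Fin k → ℤ) where
  toFun v := v - eA φ v
  map_zero' := by simp
  map_add' a b := by
    show a + b - eA φ (a + b) = (a - eA φ a) + (b - eA φ b)
    rw [map_add]; abel

noncomputable def BB : Matrix (Fin k) (Fin k) ℤ := LinearMap.toMatrix' ((TT φ).toIntLinearMap)

lemma TT_mulVec (v : Fin k → ℤ) : TT φ v = (BB φ).mulVec v := by
  have h := Matrix.toLin'_toMatrix' ((TT φ).toIntLinearMap)
  calc TT φ v = (TT φ).toIntLinearMap v := rfl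
    _ = Matrix.toLin' (BB φ) v := by rw [BB, h]
    _ = (BB φ).mulVec v := Matrix.toLin'_apply _ _

lemma TT_inj (hd : (BB φ).det ≠ 0) : Function.Injective (TT φ) := by
  have : ∀ v, TT φ v = 0 → v = 0 := by
    intro v hv
    rw [TT_mulVec] at hv
    have h1 : ((BB φ).adjugate).mulVec ((BB φ).mulVec v) = 0 := by rw [hv]; simp
    rw [Matrix.mulVec_mulVec, Matrix.adjugate_mul, Matrix.smul_mulVec,
      Matrix.one_mulVec] at h1
    rcases smul_eq_zero.1 h1 with h | h
    · exact absurd h hd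
    · exact h
  intro a b hab
  have h1 : TT φ (a - b) = 0 := by rw [map_sub, hab, sub_self]
  have h2 := this _ h1
  exact sub_eq_zero.1 h2

noncomputable def conjF (h g : Wreath 2 k) : Wreath 2 k := h * g * (φ h)⁻¹

lemma conjF_right (h g : Wreath 2 k) :
    toAdd (conjF φ h g).right = toAdd g.right + TT φ (toAdd h.right) := by
  show toAdd (h * g * (φ h)⁻¹).right = _
  rw [mul_right, mul_right, inv_right, right_phi]
  rw [toAdd_mul, toAdd_mul, toAdd_inv]
  show toAdd h.right + toAdd g.right + (- toAdd (eMM φ h.right)) = _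
  have : toAdd (eMM φ h.right) = eA φ (toAdd h.right) := by
    show _ = toAdd (eMM φ (ofAdd (toAdd h.right)))
    rw [ofAdd_toAdd]
  rw [this]
  show _ = toAdd g.right + (toAdd h.right - eA φ (toAdd h.right))
  abel

lemma conjF_conjF (h1 h2 g : Wreath 2 k) :
    conjF φ h1 (conjF φ h2 g) = conjF φ (h1 * h2) g := by
  simp only [conjF, map_mul, mul_inv_rev, mul_assoc]

end Structure2

set_option maxHeartbeats 1000000 in
/-- `ℤ_2 wr ℤ^k` has property `R_∞`: every automorphism has infinitely many
Reidemeister classes. -/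
theorem stmt9 (k : ℕ) (hk : 1 ≤ k) (φ : Wreath 2 k ≃* Wreath 2 k) :
    Infinite (ReidemeisterClasses φ) := by
  classical
  by_cases hd : (BB φ).det = 0
  · -- degenerate case: invariant from a null vector of B
    obtain ⟨c, hc0, hcB⟩ := Matrix.exists_vecMul_eq_zero_iff.2 hd
    obtain ⟨i0, hi0⟩ : ∃ i, c i ≠ 0 := by
      by_contra hcc; push_neg at hcc; exact hc0 (funext hcc)
    have key : ∀ z, ∑ i, c i * (TT φ z) i = 0 := by
      intro z
      have h2 : ∀ i, TT φ z i = (BB φ).mulVec z i := fun i => congrFun (TT_mulVec φ z) i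
      calc ∑ i, c i * TT φ z i = ∑ i, c i * (BB φ).mulVec z i :=
            Finset.sum_congr rfl fun i _ => by rw [h2]
        _ = dotProduct c ((BB φ).mulVec z) := rfl
        _ = dotProduct (Matrix.vecMul c (BB φ)) z := Matrix.dotProduct_mulVec c (BB φ) z
        _ = 0 := by rw [hcB]; exact zero_dotProduct z
    refine infinite_RC φ (fun g => ∑ i, c i * (toAdd g.right) i) ?_ ?_
    · intro g h
      have h1 : toAdd (h * g * (φ h)⁻¹).right = toAdd g.right + TT φ (toAdd h.right) :=
        conjF_right φ h g
      rw [h1]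
      calc ∑ i, c i * (toAdd g.right + TT φ (toAdd h.right)) i
          = ∑ i, (c i * toAdd g.right i + c i * TT φ (toAdd h.right) i) :=
            Finset.sum_congr rfl fun i _ => by rw [Pi.add_apply]; ring
        _ = (∑ i, c i * toAdd g.right i) + ∑ i, c i * TT φ (toAdd h.right) i :=
            Finset.sum_add_distrib
        _ = ∑ i, c i * toAdd g.right i := by rw [key, add_zero]
    · refine Set.infinite_of_injective_forall_mem
        (f := fun m : ℤ => c i0 * m) (fun a b hab => by
          exact mul_left_cancel₀ hi0 hab) ?_
      intro m
      refine ⟨inr (ofAdd (Pi.single i0 m)), ?_⟩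
      dsimp only
      rw [right_inr, toAdd_ofAdd]
      rw [Finset.sum_eq_single i0]
      · rw [Pi.single_eq_same]
      · intro b _ hb
        rw [Pi.single_eq_of_ne hb, mul_zero]
      · intro hi; exact absurd (Finset.mem_univ i0) hi
  · -- main case
    have Tinj := TT_inj φ hd
    obtain ⟨σ0, hσ0⟩ := exists_sigma φ
    have hsum : (σ0.sum fun x c => c • sh (eA φ x) (uu φ)) = Finsupp.single 0 1 :=
      (psiA_sum φ σ0).symm.trans hσ0
    obtain ⟨uA, huA⟩ := unit_single (eA φ) (eA_inj φ) (uu φ) σ0 hsum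
    set w : Fin k → ℤ := ((BB φ).adjugate).mulVec uA with hw
    have hTw : TT φ w = (BB φ).det • uA := by
      rw [TT_mulVec, hw, Matrix.mulVec_mulVec, Matrix.mul_adjugate,
        Matrix.smul_mulVec, Matrix.one_mulVec]
    set q : (Fin k → ℤ) → ℕ := fun x => gcdv ((BB φ).det • x - w) with hq
    have hqA : ∀ x, q (uA + eA φ x) = q x := by
      intro x
      have h5 : (BB φ).det • uA = w - eA φ w := by rw [← hTw]; rfl
      have hv : (BB φ).det • (uA + eA φ x) - w = eA φ ((BB φ).det • x - w) := by
        rw [map_sub, map_zsmul, smul_add, h5]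
        abel
      simp only [hq]
      rw [hv, gcdv_map (eA φ) (eA φ.symm) (eA_symm_eA φ)]
    set Φ : Lamp 2 k →+ (ℕ →₀ ZMod 2) := Finsupp.mapDomain.addMonoidHom q with hΦ
    have hΦsingle : ∀ (x : Fin k → ℤ) (c : ZMod 2),
        Φ (Finsupp.single x c) = Finsupp.single (q x) c := by
      intro x c
      rw [hΦ]
      exact Finsupp.mapDomain_single
    have hΦpsi : ∀ s, Φ (psiA φ s) = Φ s := by
      intro s
      induction s using Finsupp.induction with
      | zero => rw [map_zero, map_zero]
      | single_add a b f haf hb ih =>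
          have hsingle : psiA φ (Finsupp.single a b) = Finsupp.single (uA + eA φ a) b := by
            rcases zmod2_cases b with h | h
            · rw [h, Finsupp.single_zero, map_zero, Finsupp.single_zero]
            · rw [h, psiA_single_one, huA, sh_single]
          rw [map_add, map_add, map_add, hsingle, ih, hΦsingle, hΦsingle, hqA]
    have fiber0 : ∀ r m : Wreath 2 k, r.right = 1 → (conjF φ m r).right = 1 →
        Φ (toAdd ((conjF φ m r).left)) = Φ (toAdd r.left) := by
      intro r m hr hr'
      have h1 := conjF_right φ m r
      rw [hr', hr] at h1
      simp only [toAdd_one, zero_add] at h1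
      have hm0 : toAdd m.right = 0 := Tinj (by rw [← h1, map_zero])
      obtain ⟨τ, rfl⟩ : ∃ τ, m = inl τ := ⟨m.left, eq_inl_of_right_eq_one (mult_eq_one_of_toAdd hm0)⟩
      obtain ⟨ρ, rfl⟩ : ∃ ρ, r = inl ρ := ⟨r.left, eq_inl_of_right_eq_one hr⟩
      have hcalc : conjF φ (inl τ) (inl ρ) = inl (τ * ρ * (psiM φ τ)⁻¹) := by
        show inl τ * inl ρ * (φ (inl τ))⁻¹ = _
        rw [phi_inl, ← map_inv, ← map_mul, ← map_mul]
      rw [hcalc, left_inl, left_inl, toAdd_mul, toAdd_mul, toAdd_inv]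
      rw [map_add, map_add, map_neg]
      have hps : toAdd (psiM φ τ) = psiA φ (toAdd τ) := by
        show _ = toAdd (psiM φ (ofAdd (toAdd τ)))
        rw [ofAdd_toAdd]
      rw [hps, hΦpsi]
      abel
    set F : Wreath 2 k → (ℕ →₀ ZMod 2) := fun g =>
      if h : ∃ z, TT φ z = toAdd g.right then
        Φ (toAdd ((conjF φ (inr (ofAdd (-(Classical.choose h)))) g).left))
      else 0 with hF
    refine infinite_RC φ F ?_ ?_
    · intro g h
      by_cases H : ∃ z, TT φ z = toAdd g.right
      · have H' : ∃ z, TT φ z = toAdd (h * g * (φ h)⁻¹).right := by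
          refine ⟨Classical.choose H + toAdd h.right, ?_⟩
          rw [map_add, Classical.choose_spec H]
          exact (conjF_right φ h g).symm
        rw [hF]
        dsimp only
        rw [dif_pos H', dif_pos H]
        set z := Classical.choose H with hzdef
        set z' := Classical.choose H' with hz'def
        have hzspec : TT φ z = toAdd g.right := Classical.choose_spec H
        have hz'spec : TT φ z' = toAdd (h * g * (φ h)⁻¹).right := Classical.choose_spec H'
        have hcomp : conjF φ (inr (ofAdd (-z'))) (h * g * (φ h)⁻¹)
            = conjF φ (inr (ofAdd (-z')) * h * (inr (ofAdd (-z)))⁻¹)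
                (conjF φ (inr (ofAdd (-z))) g) := by
          calc conjF φ (inr (ofAdd (-z'))) (h * g * (φ h)⁻¹)
              = conjF φ (inr (ofAdd (-z')) * h) g := conjF_conjF φ _ h g
            _ = conjF φ ((inr (ofAdd (-z')) * h * (inr (ofAdd (-z)))⁻¹) * inr (ofAdd (-z))) g := by
                rw [inv_mul_cancel_right]
            _ = conjF φ (inr (ofAdd (-z')) * h * (inr (ofAdd (-z)))⁻¹)
                (conjF φ (inr (ofAdd (-z))) g) := (conjF_conjF φ _ _ g).symm
        rw [hcomp]
        have hR : (conjF φ (inr (ofAdd (-z))) g).right = 1 := by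
          refine mult_eq_one_of_toAdd ?_
          have := conjF_right φ (inr (ofAdd (-z))) g
          rw [right_inr, toAdd_ofAdd, map_neg (TT φ) z, hzspec] at this
          rw [this]
          abel
        have hMR : (conjF φ (inr (ofAdd (-z')) * h * (inr (ofAdd (-z)))⁻¹)
            (conjF φ (inr (ofAdd (-z))) g)).right = 1 := by
          rw [← hcomp]
          refine mult_eq_one_of_toAdd ?_
          have := conjF_right φ (inr (ofAdd (-z'))) (h * g * (φ h)⁻¹)
          rw [right_inr, toAdd_ofAdd, map_neg (TT φ) z', hz'spec] at this
          rw [this]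
          abel
        exact fiber0 _ _ hR hMR
      · have H' : ¬ ∃ z, TT φ z = toAdd (h * g * (φ h)⁻¹).right := by
          rintro ⟨z, hzz⟩
          refine H ⟨z - toAdd h.right, ?_⟩
          rw [map_sub, hzz]
          have h2 : toAdd (h * g * (φ h)⁻¹).right = toAdd g.right + TT φ (toAdd h.right) :=
            conjF_right φ h g
          rw [h2]
          abel
        rw [hF]
        dsimp only
        rw [dif_neg H', dif_neg H]
    · have hFsingle : ∀ x : Fin k → ℤ,
          F (inl (ofAdd (Finsupp.single x 1))) = Finsupp.single (q x) 1 := by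
        intro x
        have hgr : toAdd (inl (ofAdd (Finsupp.single x (1 : ZMod 2))) : Wreath 2 k).right = 0 := by
          rw [right_inl, toAdd_one]
        have H : ∃ z, TT φ z
            = toAdd (inl (ofAdd (Finsupp.single x (1 : ZMod 2))) : Wreath 2 k).right :=
          ⟨0, by rw [map_zero, hgr]⟩
        rw [hF]
        dsimp only
        rw [dif_pos H]
        have hch : Classical.choose H = 0 :=
          Tinj (by rw [Classical.choose_spec H, hgr, map_zero])
        rw [hch, neg_zero]
        have hone : (inr (ofAdd (0 : Fin k → ℤ)) : Wreath 2 k) = 1 := by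
          rw [ofAdd_zero, map_one]
        rw [hone]
        show Φ (toAdd ((1 * (inl (ofAdd (Finsupp.single x (1 : ZMod 2)))) * (φ 1)⁻¹).left)) = _
        rw [map_one, inv_one, mul_one, one_mul, left_inl, toAdd_ofAdd, hΦsingle]
      have hq_unbdd : ∀ n : ℕ, ∃ x, n ≤ q x := fun n => gcdv_big hd hk w n
      have hqinf : (Set.range q).Infinite := by
        intro hfin
        obtain ⟨n, hn⟩ := hfin.bddAbove
        obtain ⟨x, hx⟩ := hq_unbdd (n + 1)
        have := hn ⟨x, rfl⟩
        omega
      have himg : ((fun n : ℕ => Finsupp.single n (1 : ZMod 2)) '' Set.range q).Infinite :=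
        Set.Infinite.image
          ((Finsupp.single_left_injective (one_ne_zero : (1 : ZMod 2) ≠ 0) :
              Function.Injective fun n : ℕ => Finsupp.single n (1 : ZMod 2)).injOn) hqinf
      refine Set.Infinite.mono ?_ himg
      rintro _ ⟨_, ⟨x, rfl⟩, rfl⟩
      exact ⟨inl (ofAdd (Finsupp.single x 1)), hFsingle x⟩
end

section
/- Let p be a prime, k ≥ 1, Γ = ℤ_p wr ℤ^k, and let φ be an automorphism of Γ with restriction φ' to Σ. Then there exist x₀ ∈ ℤ^k and a nonzero m ∈ ℤ/pℤ such that φ'(δ_0) = m·δ_{x₀}; consequently φ'(δ_y) = m·δ_{φ̄(y) + x₀} for all y ∈ ℤ^k. -/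
-- core unit lemma
lemma uniqueAdd_max {G : Type*} [AddCommGroup G] [LinearOrder G] [IsOrderedAddMonoid G] {A B : Finset G}
    (hA : A.Nonempty) (hB : B.Nonempty) :
    UniqueAdd A B (A.max' hA) (B.max' hB) := by
  intro a b ha hb hab
  have h1 : a ≤ A.max' hA := Finset.le_max' _ _ ha
  have h2 : b ≤ B.max' hB := Finset.le_max' _ _ hb
  constructor
  · by_contra hne
    exact absurd hab (ne_of_lt (add_lt_add_of_lt_of_le (lt_of_le_of_ne h1 hne) h2))
  · by_contra hne
    exact absurd hab (ne_of_lt (add_lt_add_of_le_of_lt h1 (lt_of_le_of_ne h2 hne)))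

lemma uniqueAdd_min {G : Type*} [AddCommGroup G] [LinearOrder G] [IsOrderedAddMonoid G] {A B : Finset G}
    (hA : A.Nonempty) (hB : B.Nonempty) :
    UniqueAdd A B (A.min' hA) (B.min' hB) := by
  intro a b ha hb hab
  have h1 : A.min' hA ≤ a := Finset.min'_le _ _ ha
  have h2 : B.min' hB ≤ b := Finset.min'_le _ _ hb
  constructor
  · by_contra hne
    exact absurd hab (ne_of_gt (add_lt_add_of_lt_of_le (lt_of_le_of_ne h1 (Ne.symm hne)) h2))
  · by_contra hne
    exact absurd hab (ne_of_gt (add_lt_add_of_le_of_lt h1 (lt_of_le_of_ne h2 (Ne.symm hne))))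

noncomputable instance lexPiLinearOrderedAddCommGroup (k : ℕ) :
    IsOrderedAddMonoid (Lex (Fin k → ℤ)) :=
  inferInstance

lemma unit_is_single {K : Type*} [Field K] {G : Type*} [AddCommGroup G] [LinearOrder G] [IsOrderedAddMonoid G]
    {f g : AddMonoidAlgebra K G} (h : f * g = 1) :
    ∃ (a : G) (m : K), m ≠ 0 ∧ f = AddMonoidAlgebra.single a m := by
  have hf : f ≠ 0 := by rintro rfl; rw [zero_mul] at h; exact one_ne_zero h.symm
  have hg : g ≠ 0 := by rintro rfl; rw [mul_zero] at h; exact one_ne_zero h.symm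
  have hfs : f.coeff.support.Nonempty :=
    Finsupp.support_nonempty_iff.mpr (fun h0 => hf (AddMonoidAlgebra.coeff_injective h0))
  have hgs : g.coeff.support.Nonempty :=
    Finsupp.support_nonempty_iff.mpr (fun h0 => hg (AddMonoidAlgebra.coeff_injective h0))
  have key : ∀ a b : G, f.coeff a ≠ 0 → g.coeff b ≠ 0 →
      (f * g).coeff (a + b) = f.coeff a * g.coeff b → a + b = 0 := by
    intro a b ha hb hab
    by_contra hne
    have : (f * g).coeff (a + b) = 0 := by
      rw [h, AddMonoidAlgebra.one_def, AddMonoidAlgebra.coeff_single, Finsupp.single_apply_eq_zero.mpr]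
      intro hc; exact absurd hc hne
    rw [hab] at this
    exact (mul_ne_zero ha hb) this
  have hmaxf := Finsupp.mem_support_iff.mp (f.coeff.support.max'_mem hfs)
  have hmaxg := Finsupp.mem_support_iff.mp (g.coeff.support.max'_mem hgs)
  have hminf := Finsupp.mem_support_iff.mp (f.coeff.support.min'_mem hfs)
  have hming := Finsupp.mem_support_iff.mp (g.coeff.support.min'_mem hgs)
  have hM : f.coeff.support.max' hfs + g.coeff.support.max' hgs = 0 :=
    key _ _ hmaxf hmaxg (AddMonoidAlgebra.coeff_mul_add_of_uniqueAdd (uniqueAdd_max hfs hgs))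
  have hm : f.coeff.support.min' hfs + g.coeff.support.min' hgs = 0 :=
    key _ _ hminf hming (AddMonoidAlgebra.coeff_mul_add_of_uniqueAdd (uniqueAdd_min hfs hgs))
  have heq : f.coeff.support.max' hfs = f.coeff.support.min' hfs := by
    have h1 : g.coeff.support.min' hgs ≤ g.coeff.support.max' hgs :=
      Finset.min'_le _ _ (g.coeff.support.max'_mem hgs)
    have h2 : f.coeff.support.min' hfs ≤ f.coeff.support.max' hfs :=
      Finset.min'_le _ _ (f.coeff.support.max'_mem hfs)
    refine le_antisymm ?_ h2
    have e1 : f.coeff.support.max' hfs = -(g.coeff.support.max' hgs) := eq_neg_of_add_eq_zero_left hM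
    have e2 : f.coeff.support.min' hfs = -(g.coeff.support.min' hgs) := eq_neg_of_add_eq_zero_left hm
    rw [e1, e2]
    exact neg_le_neg h1
  have hsub : f.coeff.support ⊆ {f.coeff.support.max' hfs} := by
    intro a ha
    rw [Finset.mem_singleton]
    refine le_antisymm (Finset.le_max' _ _ ha) ?_
    rw [heq]
    exact Finset.min'_le _ _ ha
  refine ⟨f.coeff.support.max' hfs, f.coeff (f.coeff.support.max' hfs), hmaxf, ?_⟩
  exact congrArg AddMonoidAlgebra.ofCoeff (Finsupp.support_subset_singleton.mp hsub)

namespace WreathAux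

open SemidirectProduct Multiplicative

variable {p k : ℕ}

/-- `Lamp` seen as the group algebra. -/
def toMA (f : Lamp p k) : AddMonoidAlgebra (ZMod p) (Fin k → ℤ) := AddMonoidAlgebra.ofCoeff f

lemma toMA_add (f g : Lamp p k) : toMA (f + g) = toMA f + toMA g := rfl

/-- additive shift -/
def wShift (y : Fin k → ℤ) (f : Lamp p k) : Lamp p k :=
  Finsupp.equivMapDomain (Equiv.addRight y) f

lemma wShift_single (y x : Fin k → ℤ) (c : ZMod p) :
    wShift y (Finsupp.single x c) = Finsupp.single (x + y) c := by
  simp [wShift]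

lemma lampShift_ofAdd (y : Fin k → ℤ) (f : Lamp p k) :
    (lampShift p k (ofAdd y)) (ofAdd f) = ofAdd (wShift y f) := rfl

/-- restriction of an automorphism to the lamp part, additively -/
noncomputable def wPsi (Φ : Wreath p k ≃* Wreath p k) (f : Lamp p k) : Lamp p k :=
  Multiplicative.toAdd ((Φ (inl (ofAdd f))).left)

/-- the induced map on `ℤ^k` -/
noncomputable def wB (Φ : Wreath p k ≃* Wreath p k) (y : Fin k → ℤ) : Fin k → ℤ :=
  Multiplicative.toAdd (rightHom (Φ (inr (ofAdd y))))

lemma rightHom_eq_one (hp : p ≠ 0) (Φ : Wreath p k ≃* Wreath p k) (f : Lamp p k) :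
    rightHom (Φ (inl (ofAdd f))) = 1 := by
  have hsmul : p • f = 0 := by
    ext x
    simp [nsmul_eq_mul, ZMod.natCast_self]
  have hpow : (inl (ofAdd f) : Wreath p k) ^ p = 1 := by
    rw [← map_pow, ← ofAdd_nsmul, hsmul, ofAdd_zero, map_one]
  have h2 : (rightHom (Φ (inl (ofAdd f)))) ^ p = 1 := by
    rw [← map_pow, ← map_pow, hpow, map_one, map_one]
  have h3 : p • Multiplicative.toAdd (rightHom (Φ (inl (ofAdd f)))) = 0 := by
    rw [← toAdd_pow, h2]
    rfl
  rw [← toAdd_eq_zero]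
  funext x
  have h4 := congrFun h3 x
  have h5 : (p : ℤ) * (Multiplicative.toAdd (rightHom (Φ (inl (ofAdd f)))) x) = 0 := by
    simpa [nsmul_eq_mul] using h4
  rcases mul_eq_zero.mp h5 with h | h
  · exact absurd (by exact_mod_cast h) hp
  · exact h

lemma wPsi_spec (hp : p ≠ 0) (Φ : Wreath p k ≃* Wreath p k) (f : Lamp p k) :
    Φ (inl (ofAdd f)) = inl (ofAdd (wPsi Φ f)) := by
  have h := rightHom_eq_one hp Φ f
  ext
  · simp [wPsi]
  · rw [right_inl]
    exact congrFun (congrArg Multiplicative.toAdd h) _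

lemma wPsi_symm_wPsi (hp : p ≠ 0) (Φ : Wreath p k ≃* Wreath p k) (f : Lamp p k) :
    wPsi Φ.symm (wPsi Φ f) = f := by
  have h1 := wPsi_spec hp Φ.symm (wPsi Φ f)
  rw [← wPsi_spec hp Φ f, MulEquiv.symm_apply_apply] at h1
  exact (ofAdd.injective (inl_injective h1)).symm

lemma wPsi_zero (Φ : Wreath p k ≃* Wreath p k) : wPsi Φ 0 = 0 := by
  simp [wPsi]

lemma wPsi_add (hp : p ≠ 0) (Φ : Wreath p k ≃* Wreath p k) (f g : Lamp p k) :
    wPsi Φ (f + g) = wPsi Φ f + wPsi Φ g := by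
  have h2 : Φ (inl (ofAdd (f + g))) = inl (ofAdd (wPsi Φ f + wPsi Φ g)) := by
    rw [ofAdd_add, map_mul, map_mul, wPsi_spec hp Φ f, wPsi_spec hp Φ g, ← map_mul, ← ofAdd_add]
  rw [wPsi_spec hp Φ (f + g)] at h2
  exact ofAdd.injective (inl_injective h2)

lemma wPsi_nsmul (hp : p ≠ 0) (Φ : Wreath p k ≃* Wreath p k) (n : ℕ) (f : Lamp p k) :
    wPsi Φ (n • f) = n • wPsi Φ f := by
  induction n with
  | zero => simp [wPsi_zero]
  | succ n ih => rw [succ_nsmul, succ_nsmul, wPsi_add hp, ih]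

lemma wPsi_smul (hp : p ≠ 0) [NeZero p] (Φ : Wreath p k ≃* Wreath p k) (c : ZMod p)
    (f : Lamp p k) : wPsi Φ (c • f) = c • wPsi Φ f := by
  have h1 : c • f = c.val • f := by rw [← Nat.cast_smul_eq_nsmul (ZMod p), ZMod.natCast_val,
    ZMod.cast_id]
  have h2 : c • wPsi Φ f = c.val • wPsi Φ f := by rw [← Nat.cast_smul_eq_nsmul (ZMod p),
    ZMod.natCast_val, ZMod.cast_id]
  rw [h1, h2, wPsi_nsmul hp]

lemma conj_inl (γ : Wreath p k) (n : Multiplicative (Lamp p k)) :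
    γ * inl n * γ⁻¹ = inl ((lampShift p k (rightHom γ)) n) := by
  have hr : rightHom γ = γ.right := rfl
  rw [hr]
  conv_lhs => rw [← inl_left_mul_inr_right γ]
  have hgr : (inl γ.left * inr γ.right : Wreath p k) * inl n * (inl γ.left * inr γ.right)⁻¹
      = inl γ.left * (inr γ.right * inl n * (inr γ.right)⁻¹) * (inl γ.left)⁻¹ := by
    group
  have e1 : (inr γ.right : Wreath p k)⁻¹ = inr γ.right⁻¹ := (map_inv inr γ.right).symm
  have e2 : (inl γ.left : Wreath p k)⁻¹ = inl γ.left⁻¹ := (map_inv inl γ.left).symm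
  rw [hgr, e1, e2, ← inl_aut, ← map_mul, ← map_mul]
  congr 1
  rw [mul_comm γ.left, mul_inv_cancel_right]

lemma wPsi_shift (hp : p ≠ 0) (Φ : Wreath p k ≃* Wreath p k) (y : Fin k → ℤ) (f : Lamp p k) :
    wPsi Φ (wShift y f) = wShift (wB Φ y) (wPsi Φ f) := by
  have h2 : (inl (ofAdd (wShift y f)) : Wreath p k)
      = inr (ofAdd y) * inl (ofAdd f) * inr (ofAdd y)⁻¹ := by
    rw [← lampShift_ofAdd]
    exact inl_aut _ _
  have h3 := congrArg Φ h2
  rw [map_mul, map_mul, map_inv, map_inv, wPsi_spec hp Φ f, conj_inl,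
    wPsi_spec hp Φ (wShift y f)] at h3
  have h5 : rightHom (Φ (inr (ofAdd y))) = ofAdd (wB Φ y) := (ofAdd_toAdd _).symm
  rw [h5, lampShift_ofAdd] at h3
  exact ofAdd.injective (inl_injective h3)

lemma wB_wB_symm (hp : p ≠ 0) (Φ : Wreath p k ≃* Wreath p k) (y : Fin k → ℤ) :
    wB Φ (wB Φ.symm y) = y := by
  have h := inl_left_mul_inr_right (Φ.symm (inr (ofAdd y)))
  have h2 := congrArg Φ h
  rw [map_mul, MulEquiv.apply_symm_apply] at h2
  have h3 := congrArg rightHom h2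
  rw [map_mul] at h3
  rw [show ((Φ.symm (inr (ofAdd y))).left) = ofAdd (Multiplicative.toAdd ((Φ.symm (inr (ofAdd y))).left))
    from (ofAdd_toAdd _).symm, rightHom_eq_one hp Φ _, one_mul, rightHom_inr] at h3
  have h4 : rightHom (Φ.symm (inr (ofAdd y))) = ofAdd (wB Φ.symm y) := (ofAdd_toAdd _).symm
  rw [show ((Φ.symm (inr (ofAdd y))).right) = rightHom (Φ.symm (inr (ofAdd y))) from rfl, h4] at h3
  simpa [wB] using congrArg Multiplicative.toAdd h3

lemma single_mul_eq_shift {K : Type*} [Semiring K] {G : Type*} [AddCommGroup G]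
    (a : G) (c : K) (v : AddMonoidAlgebra K G) :
    AddMonoidAlgebra.single a c * v
      = c • AddMonoidAlgebra.ofCoeff (Finsupp.equivMapDomain (Equiv.addRight a) v.coeff) := by
  induction v using AddMonoidAlgebra.induction_linear with
  | zero => simp
  | add f g hf hg =>
    rw [mul_add, hf, hg, ← smul_add]
    congr 1
    exact (congrArg AddMonoidAlgebra.ofCoeff
      (map_add (Finsupp.domCongr (Equiv.addRight a)) f.coeff g.coeff)).symm
  | single b d =>
    rw [AddMonoidAlgebra.single_mul_single]
    simp [add_comm, Finsupp.smul_single]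

lemma wPsi_mul (hp : p ≠ 0) [NeZero p] (Φ : Wreath p k ≃* Wreath p k) (f : Lamp p k) :
    toMA (wPsi Φ f)
      = toMA (Finsupp.mapDomain (wB Φ) f)
        * toMA (wPsi Φ (Finsupp.single 0 1)) := by
  induction f using Finsupp.induction_linear with
  | zero => rw [wPsi_zero]; simp [toMA]
  | add f g hf hg =>
    rw [wPsi_add hp, toMA_add, Finsupp.mapDomain_add, toMA_add, add_mul, ← hf, ← hg]
  | single x c =>
    have h2 : wPsi Φ (Finsupp.single x c) = c • wShift (wB Φ x) (wPsi Φ (Finsupp.single 0 1)) := by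
      rw [show (Finsupp.single x c : Lamp p k) = c • Finsupp.single x 1 by
            simp [Finsupp.smul_single],
        wPsi_smul hp,
        show (Finsupp.single x 1 : Lamp p k) = wShift x (Finsupp.single 0 1) by
            rw [wShift_single, zero_add],
        wPsi_shift hp]
    rw [h2, Finsupp.mapDomain_single,
      show toMA (Finsupp.single (wB Φ x) c) = AddMonoidAlgebra.single (wB Φ x) c from rfl,
      single_mul_eq_shift]
    rfl

end WreathAux

open WreathAux in
/-- For a prime `p` and any automorphism `φ` of `ℤ_p wr ℤ^k`, there are `x₀ ∈ ℤ^k` and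
`m ≠ 0` in `ℤ/pℤ` with `φ'(δ_0) = m·δ_{x₀}`; consequently `φ'(δ_y) = m·δ_{φ̄(y) + x₀}`
for the induced automorphism `φ̄` of `ℤ^k`. -/
theorem stmt11 (p : ℕ) (hp : p.Prime) (k : ℕ) (hk : 1 ≤ k)
    (φ : Wreath p k ≃* Wreath p k) :
    ∃ (x₀ : Fin k → ℤ) (m : ZMod p), m ≠ 0 ∧
      φ (SemidirectProduct.inl (lampDelta p k 0))
        = SemidirectProduct.inl (Multiplicative.ofAdd (Finsupp.single x₀ m)) ∧
      ∀ B : (Fin k → ℤ) ≃+ (Fin k → ℤ),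
        (∀ γ : Wreath p k, Multiplicative.toAdd (SemidirectProduct.rightHom (φ γ))
            = B (Multiplicative.toAdd (SemidirectProduct.rightHom γ))) →
        ∀ y : Fin k → ℤ, φ (SemidirectProduct.inl (lampDelta p k y))
          = SemidirectProduct.inl (Multiplicative.ofAdd (Finsupp.single (B y + x₀) m)) := by
  haveI : Fact p.Prime := ⟨hp⟩
  haveI : NeZero p := ⟨hp.ne_zero⟩
  have hpne : p ≠ 0 := hp.ne_zero
  classical
  -- the unit equation
  have h1 := wPsi_mul hpne φ.symm (wPsi φ (Finsupp.single 0 1))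
  have h2 : wPsi φ.symm (wPsi φ (Finsupp.single 0 1)) = Finsupp.single 0 1 :=
    wPsi_symm_wPsi hpne φ (Finsupp.single 0 1)
  have hunit : toMA (Finsupp.mapDomain (wB φ.symm) (wPsi φ (Finsupp.single 0 1)))
      * toMA (wPsi φ.symm (Finsupp.single 0 1)) = 1 := by
    rw [← h1, h2]
    exact (AddMonoidAlgebra.one_def : (1 : AddMonoidAlgebra (ZMod p) (Fin k → ℤ)) = _).symm
  -- transfer to the lex-ordered group
  let e : (Fin k → ℤ) ≃+ Lex (Fin k → ℤ) := { toEquiv := toLex, map_add' := fun _ _ => rfl }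
  let L := AddMonoidAlgebra.domCongr (ZMod p) (ZMod p) e
  have hL : L (toMA (Finsupp.mapDomain (wB φ.symm) (wPsi φ (Finsupp.single 0 1))))
      * L (toMA (wPsi φ.symm (Finsupp.single 0 1))) = 1 := by
    rw [← map_mul, hunit, map_one]
  obtain ⟨a, m, hm, hLw⟩ := unit_is_single (G := Lex (Fin k → ℤ)) hL
  have hw : Finsupp.mapDomain (wB φ.symm) (wPsi φ (Finsupp.single 0 1))
      = Finsupp.single (ofLex a) m := by
    have h' : L (toMA (Finsupp.mapDomain (wB φ.symm) (wPsi φ (Finsupp.single 0 1))))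
        = L (AddMonoidAlgebra.single (ofLex a) m) :=
      hLw.trans (AddMonoidAlgebra.domCongr_single (R := ZMod p) (A := ZMod p) e (ofLex a) m).symm
    exact congrArg AddMonoidAlgebra.coeff (L.injective h')
  have hu : wPsi φ (Finsupp.single 0 1) = Finsupp.single (wB φ (ofLex a)) m := by
    have hcomp : Finsupp.mapDomain (wB φ)
        (Finsupp.mapDomain (wB φ.symm) (wPsi φ (Finsupp.single 0 1)))
        = wPsi φ (Finsupp.single 0 1) := by
      rw [← Finsupp.mapDomain_comp]
      have hid : wB φ ∘ wB φ.symm = id := funext (wB_wB_symm hpne φ)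
      rw [hid, Finsupp.mapDomain_id]
    rw [← hcomp, hw, Finsupp.mapDomain_single]
  refine ⟨wB φ (ofLex a), m, hm, ?_, ?_⟩
  · rw [lampDelta, wPsi_spec hpne φ, hu]
  · intro B hB y
    have hBy : wB φ y = B y := by
      have h := hB (SemidirectProduct.inr (Multiplicative.ofAdd y))
      simpa [wB, SemidirectProduct.rightHom_inr] using h
    have hψ : wPsi φ (Finsupp.single y 1) = Finsupp.single (B y + wB φ (ofLex a)) m := by
      rw [show (Finsupp.single y (1 : ZMod p)) = wShift y (Finsupp.single 0 1) by
            rw [wShift_single, zero_add],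
        wPsi_shift hpne, hu, wShift_single, hBy, add_comm]
    rw [lampDelta, wPsi_spec hpne φ, hψ]
end

section
/- Let p be a prime, k ≥ 1, A ∈ GL(k, ℤ), m ∈ ℤ/pℤ with m ≠ 0, and let φ' be the additive automorphism of Σ = ⨁_{x ∈ ℤ^k} ℤ/pℤ defined by φ'(δ_y) = m·δ_{A y} for all y ∈ ℤ^k. If x ∈ ℤ^k has infinite orbit {Aⁿ x : n ∈ ℤ} under A, then the restriction of id − φ' to the subgroup of elements of Σ supported in this orbit is not surjective onto that subgroup; in particular, δ_x does not lie in the image of this restriction. -/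
lemma stmt12_aux_fix {k : ℕ} (A : AddAut (Fin k → ℤ)) (x : Fin k → ℤ) (e : ℤ)
    (h : (e • A) x = x) : ∀ q : ℤ, ((e * q) • A) x = x := by
  have h' : ((-e) • A) x = x := by
    conv_lhs => rw [← h, ← AddAut.add_apply, ← add_zsmul, neg_add_cancel, zero_zsmul]
    rfl
  intro q
  induction q using Int.induction_on with
  | zero => simp
  | succ n ih =>
    rw [show e * ((n : ℤ) + 1) = e + e * n by ring, add_zsmul, AddAut.add_apply, ih, h]
  | pred n ih =>
    rw [show e * (-(n : ℤ) - 1) = -e + e * (-n) by ring, add_zsmul, AddAut.add_apply, ih, h']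

lemma stmt12_aux_inj {k : ℕ} (A : AddAut (Fin k → ℤ)) (x : Fin k → ℤ)
    (hx : {v : Fin k → ℤ | ∃ n : ℤ, (n • A) x = v}.Infinite) :
    Function.Injective (fun n : ℤ => (n • A) x) := by
  intro a b hab
  by_contra hne
  simp only at hab
  have h1 : ((a - b) • A) x = x := by
    have : ((a - b) • A) x = ((-b) • A) ((a • A) x) := by
      rw [← AddAut.add_apply, ← add_zsmul]
      ring_nf
    rw [this, hab, ← AddAut.add_apply, ← add_zsmul, neg_add_cancel, zero_zsmul]
    rfl
  set d : ℤ := |a - b| with hd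
  have hd0 : 0 < d := abs_pos.mpr (sub_ne_zero.mpr hne)
  have hdfix : (d • A) x = x := by
    rcases abs_cases (a - b) with ⟨h, _⟩ | ⟨h, _⟩
    · rw [hd, h]
      simpa using stmt12_aux_fix A x (a - b) h1 1
    · rw [hd, h]
      simpa using stmt12_aux_fix A x (a - b) h1 (-1)
  apply hx
  have hsub : {v : Fin k → ℤ | ∃ n : ℤ, (n • A) x = v} ⊆
      (fun r : ℤ => (r • A) x) '' (Set.Ico 0 d) := by
    rintro v ⟨n, rfl⟩
    refine ⟨n % d, ⟨Int.emod_nonneg n hd0.ne', Int.emod_lt_of_pos n hd0⟩, ?_⟩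
    have hfix := stmt12_aux_fix A x d hdfix (n / d)
    calc ((n % d) • A) x = ((n % d) • A) (((d * (n / d)) • A) x) := by rw [hfix]
      _ = ((n % d + d * (n / d)) • A) x := by rw [add_zsmul, AddAut.add_apply]
      _ = (n • A) x := by rw [Int.emod_add_mul_ediv n d]
  exact Set.Finite.subset (Set.Finite.image _ (Set.finite_Ico 0 d)) hsub

/-- If `x` has infinite `A`-orbit, then `id - φ'`, where `φ'(δ_y) = m·δ_{A y}` on
`Σ = ⨁_{ℤ^k} ℤ/pℤ`, is not surjective on the subgroup of elements supported in the
orbit of `x`; in particular `δ_x` is not in the image of this restriction. -/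
theorem stmt12 (p k : ℕ) (hp : p.Prime) (hk : 1 ≤ k) (A : AddAut (Fin k → ℤ))
    (m : ZMod p) (hm : m ≠ 0) (x : Fin k → ℤ)
    (hx : {v : Fin k → ℤ | ∃ n : ℤ, (n • A) x = v}.Infinite) :
    (¬ ∀ g : (Fin k → ℤ) →₀ ZMod p, (∀ y, (¬ ∃ n : ℤ, (n • A) x = y) → g y = 0) →
        ∃ f : (Fin k → ℤ) →₀ ZMod p, (∀ y, (¬ ∃ n : ℤ, (n • A) x = y) → f y = 0) ∧
          f - m • Finsupp.equivMapDomain A.toEquiv f = g) ∧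
    ¬ ∃ f : (Fin k → ℤ) →₀ ZMod p, (∀ y, (¬ ∃ n : ℤ, (n • A) x = y) → f y = 0) ∧
        f - m • Finsupp.equivMapDomain A.toEquiv f = Finsupp.single x 1 := by
  haveI := Fact.mk hp
  have hinj := stmt12_aux_inj A x hx
  have key : ¬ ∃ f : (Fin k → ℤ) →₀ ZMod p, (∀ y, (¬ ∃ n : ℤ, (n • A) x = y) → f y = 0) ∧
      f - m • Finsupp.equivMapDomain A.toEquiv f = Finsupp.single x 1 := by
    rintro ⟨f, hsupp, heq⟩
    set c : ℤ → ZMod p := fun n => f ((n • A) x) with hc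
    have hrec : ∀ n : ℤ, c n - m * c (n - 1) = if n = 0 then 1 else 0 := by
      intro n
      have hev := DFunLike.congr_fun heq ((n • A) x)
      rw [Finsupp.sub_apply, Finsupp.smul_apply, Finsupp.equivMapDomain_apply] at hev
      have h2 : A.toEquiv.symm ((n • A) x) = ((n - 1) • A) x := by
        rw [Equiv.symm_apply_eq]
        show (n • A) x = A (((n - 1) • A) x)
        rw [← AddAut.add_apply]
        congr 1
        conv_lhs => rw [show n = 1 + (n - 1) by ring]
        rw [one_add_zsmul]
      have h3 : (x = (n • A) x) ↔ n = 0 := by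
        constructor
        · intro h
          have : (n • A) x = ((0 : ℤ) • A) x := by simpa using h.symm
          exact hinj this
        · rintro rfl; simp
      rw [h2, Finsupp.single_apply] at hev
      rw [smul_eq_mul] at hev
      simpa [h3] using hev
    have hS : {n : ℤ | c n ≠ 0}.Finite := by
      have hsub : {n : ℤ | c n ≠ 0} ⊆ (fun n : ℤ => (n • A) x) ⁻¹' (f.support : Set _) := by
        intro n hn
        simpa [Finsupp.mem_support_iff] using hn
      exact Set.Finite.subset (Set.Finite.preimage hinj.injOn f.support.finite_toSet) hsub
    have hc0 : c 0 = 0 := by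
      by_contra h0
      have hposall : ∀ j : ℕ, c j ≠ 0 := by
        intro j
        induction j with
        | zero => simpa using h0
        | succ n ih =>
          have hr := hrec ((n : ℤ) + 1)
          have hne : ((n : ℤ) + 1) ≠ 0 := by positivity
          rw [if_neg hne, sub_eq_zero] at hr
          push_cast
          rw [hr]
          simpa using mul_ne_zero hm ih
      exact Set.infinite_of_injective_forall_mem (f := fun j : ℕ => (j : ℤ))
        (fun a b h => Nat.cast_injective h) (fun j => hposall j) hS
    have hnegall : ∀ j : ℕ, c (-(1 + j)) ≠ 0 := by
      intro j
      induction j with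
      | zero =>
        have hr := hrec 0
        rw [if_pos rfl, hc0, zero_sub] at hr
        intro h
        rw [show (-(1 + (0 : ℕ)) : ℤ) = 0 - 1 by norm_num] at h
        rw [h, mul_zero, neg_zero] at hr
        exact one_ne_zero hr.symm
      | succ n ih =>
        intro h0
        have hr := hrec (-(1 + (n : ℤ)))
        have hne : (-(1 + (n : ℤ))) ≠ 0 := by
          have : (0 : ℤ) < 1 + n := by positivity
          omega
        rw [if_neg hne, sub_eq_zero] at hr
        apply ih
        rw [hr, show (-(1 + (n : ℤ)) - 1) = -(1 + ((n : ℕ) + 1 : ℕ)) by push_cast; ring, h0,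
          mul_zero]
    refine Set.infinite_of_injective_forall_mem (f := fun j : ℕ => (-(1 + j) : ℤ))
      ?_ (fun j => hnegall j) hS
    intro a b h
    simp only [neg_inj, add_right_inj] at h
    exact_mod_cast h
  refine ⟨fun hall => key ?_, key⟩
  apply hall
  intro y hy
  apply Finsupp.single_eq_of_ne
  intro hxy
  exact hy ⟨0, by simpa using hxy.symm⟩
end

section
/- Let k ≥ 1 and A ∈ GL(k, ℤ), acting on ℤ^k. (a) For every x ∈ ℤ^k with x ≠ 0, there are infinitely many pairwise distinct orbits of the cyclic group generated by A whose cardinality equals the cardinality of the orbit of x (such orbits occur among the orbits of the multiples i·x, i ≥ 1). (b) If the automorphism of ℤ^k given by A has finite Reidemeister number, then 0 is the only fixed point of A on ℤ^k, i.e. the only orbit consisting of a single point is {0}. -/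
private lemma dvd_hom13 {k : ℕ} (B : (Fin k → ℤ) →+ (Fin k → ℤ)) (v : Fin k → ℤ) (d : ℤ)
    (h : ∀ l, d ∣ v l) (j : Fin k) : d ∣ B v j := by
  choose c hc using h
  have hv : v = d • c := funext fun l => by rw [hc l]; rfl
  rw [hv, map_zsmul]
  exact ⟨B c j, rfl⟩

private noncomputable def gcdN13 {k : ℕ} (v : Fin k → ℤ) : ℕ :=
  Finset.gcd Finset.univ fun l => (v l).natAbs

private lemma gcdN13_dvd_hom {k : ℕ} (B : (Fin k → ℤ) →+ (Fin k → ℤ)) (v : Fin k → ℤ) :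
    gcdN13 v ∣ gcdN13 (B v) := by
  apply Finset.dvd_gcd
  intro j _
  rw [← Int.natAbs_natCast (gcdN13 v), Int.natAbs_dvd_natAbs]
  apply dvd_hom13 B v
  intro l
  have : gcdN13 v ∣ (v l).natAbs := Finset.gcd_dvd (Finset.mem_univ l)
  exact Int.dvd_natAbs.mp (Int.natCast_dvd_natCast.mpr this)

private lemma gcdN13_aut {k : ℕ} (B : AddAut (Fin k → ℤ)) (v : Fin k → ℤ) :
    gcdN13 (B v) = gcdN13 v := by
  refine Nat.dvd_antisymm ?_ (gcdN13_dvd_hom B.toAddMonoidHom v)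
  have := gcdN13_dvd_hom B.symm.toAddMonoidHom (B v)
  simpa using this

private lemma gcdN13_smul {k : ℕ} (c : ℕ) (v : Fin k → ℤ) :
    gcdN13 ((c : ℤ) • v) = c * gcdN13 v := by
  unfold gcdN13
  have : ∀ l, (((c : ℤ) • v) l).natAbs = c * (v l).natAbs := by
    intro l; simp [Int.natAbs_mul]
  simp_rw [this]
  rw [Finset.gcd_mul_left]
  simp

/-- (a) For `x ≠ 0` there are infinitely many orbits of `A ∈ GL(k,ℤ)` on `ℤ^k` of the
same cardinality as the orbit of `x`. (b) If the automorphism `A` of `ℤ^k` has finite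
Reidemeister number, then `0` is its only fixed point. -/
theorem stmt13 (k : ℕ) (hk : 1 ≤ k) (A : AddAut (Fin k → ℤ)) :
    (∀ x : Fin k → ℤ, x ≠ 0 →
      {S : Set (Fin k → ℤ) | (∃ v : Fin k → ℤ, S = {w | ∃ n : ℤ, (n • A) v = w}) ∧
        Cardinal.mk S = Cardinal.mk {w : Fin k → ℤ | ∃ n : ℤ, (n • A) x = w}}.Infinite) ∧
    (Finite (Quot (fun v w : Fin k → ℤ => ∃ h : Fin k → ℤ, w = h + v - A h)) →
      ∀ v : Fin k → ℤ, A v = v → v = 0) := by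
  constructor
  · -- part (a)
    intro x hx
    have hg : gcdN13 x ≠ 0 := by
      intro h
      apply hx
      funext l
      have := Finset.gcd_eq_zero_iff.mp h l (Finset.mem_univ l)
      simpa [Int.natAbs_eq_zero] using this
    -- the orbits of (i+1) • x
    apply Set.infinite_of_injective_forall_mem
      (f := fun i : ℕ => {w : Fin k → ℤ | ∃ n : ℤ, (n • A) (((i + 1 : ℕ) : ℤ) • x) = w})
    · -- injective
      intro i j hij
      dsimp only at hij
      have hmem : ((i + 1 : ℕ) : ℤ) • x ∈
          {w : Fin k → ℤ | ∃ n : ℤ, (n • A) (((i + 1 : ℕ) : ℤ) • x) = w} :=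
        ⟨0, by simp⟩
      rw [hij] at hmem
      obtain ⟨n, hn⟩ := hmem
      have := congrArg gcdN13 hn
      rw [gcdN13_aut (n • A), gcdN13_smul, gcdN13_smul] at this
      have := Nat.eq_of_mul_eq_mul_right (Nat.pos_of_ne_zero hg) this
      omega
    · -- each orbit is in the set
      intro i
      refine ⟨⟨((i + 1 : ℕ) : ℤ) • x, rfl⟩, ?_⟩
      have himg : {w : Fin k → ℤ | ∃ n : ℤ, (n • A) (((i + 1 : ℕ) : ℤ) • x) = w} =
          (fun w => ((i + 1 : ℕ) : ℤ) • w) '' {w : Fin k → ℤ | ∃ n : ℤ, (n • A) x = w} := by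
        ext w
        constructor
        · rintro ⟨n, hn⟩
          exact ⟨(n • A) x, ⟨n, rfl⟩, by rw [← hn, map_zsmul]⟩
        · rintro ⟨u, ⟨n, hn⟩, hu⟩
          exact ⟨n, by rw [map_zsmul, hn]; exact hu⟩
      rw [himg]
      exact Cardinal.mk_image_eq (smul_right_injective (Fin k → ℤ) (by positivity))
  · -- part (b)
    intro hfin v hv
    set r : (Fin k → ℤ) → (Fin k → ℤ) → Prop :=
      fun v w => ∃ h : Fin k → ℤ, w = h + v - A h with hr
    have hequiv : Equivalence r := by
      constructor
      · intro a; exact ⟨0, by simp⟩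
      · rintro a b ⟨h, hw⟩
        exact ⟨-h, by rw [map_neg, hw]; abel⟩
      · rintro a b c ⟨h1, h1w⟩ ⟨h2, h2w⟩
        exact ⟨h1 + h2, by rw [map_add, h2w, h1w]; abel⟩
    -- for each w there is c ≠ 0 with c • w in the image of (1 - A)
    have key : ∀ w : Fin k → ℤ, ∃ c : ℤ, c ≠ 0 ∧ ∃ h : Fin k → ℤ, c • w = h - A h := by
      intro w
      obtain ⟨a, b, hab, heq⟩ :=
        Finite.exists_ne_map_eq_of_infinite (fun n : ℤ => Quot.mk r (n • w))
      have hr' : r (a • w) (b • w) := (hequiv.eqvGen_iff).mp (Quot.eq.mp heq)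
      obtain ⟨h, hw⟩ := hr'
      refine ⟨b - a, sub_ne_zero_of_ne (Ne.symm hab), h, ?_⟩
      rw [sub_smul, hw]; abel
    -- the matrix of 1 - A
    set T : Matrix (Fin k) (Fin k) ℤ :=
      Matrix.of (fun i j => ((Pi.single j 1 : Fin k → ℤ) - A (Pi.single j 1)) i) with hT
    have hTv : ∀ w : Fin k → ℤ, T.mulVec w = w - A w := by
      intro w
      funext i
      have hAw : A w = ∑ j, w j • A (Pi.single j 1) := by
        conv_lhs => rw [← Finset.univ_sum_single w]
        rw [map_sum]
        congr 1
        funext j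
        rw [← map_zsmul]
        congr 1
        funext l
        simp [Pi.single_apply, mul_comm]
      have hw : w i = ∑ j, (Pi.single j 1 : Fin k → ℤ) i * w j := by
        simp [Pi.single_apply]
      rw [Matrix.mulVec, dotProduct]
      simp only [hT, Matrix.of_apply, Pi.sub_apply, sub_mul]
      rw [Finset.sum_sub_distrib, ← hw, hAw, Finset.sum_apply]
      congr 1
      refine Finset.sum_congr rfl fun j _ => ?_
      simp [mul_comm]
    choose c hc h hch using key
    -- T * H = diagonal matrix
    set H : Matrix (Fin k) (Fin k) ℤ := Matrix.of (fun p q => h (Pi.single q 1) p) with hH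
    have hTH : T * H = Matrix.diagonal (fun i => c (Pi.single i 1)) := by
      ext i j
      have : (T * H) i j = (T.mulVec (h (Pi.single j 1))) i := by
        rw [Matrix.mul_apply, Matrix.mulVec, dotProduct]
        rfl
      rw [this, hTv, ← hch (Pi.single j 1)]
      rcases eq_or_ne i j with rfl | hij
      · simp [Matrix.diagonal]
      · simp [Matrix.diagonal, hij, Pi.single_apply, Ne.symm hij]
    have hdet : T.det ≠ 0 := by
      intro h0
      have : (T * H).det = 0 := by rw [Matrix.det_mul, h0, zero_mul]
      rw [hTH, Matrix.det_diagonal] at this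
      exact Finset.prod_ne_zero_iff.mpr (fun i _ => hc (Pi.single i 1)) this
    have hTv0 : T.mulVec v = 0 := by rw [hTv, hv, sub_self]
    have : T.det • v = 0 := by
      have := congrArg (fun u => T.adjugate.mulVec u) hTv0
      simpa [Matrix.mulVec_mulVec, Matrix.adjugate_mul, Matrix.smul_mulVec] using this
    rcases smul_eq_zero.mp this with h0 | h0
    · exact absurd h0 hdet
    · exact h0
end

section
/- Let p > 3 be a prime and k ≥ 1. Then there exists an automorphism φ of Γ = ℤ_p wr ℤ^k with finite Reidemeister number R(φ) < ∞ (for instance, the automorphism induced by φ̄ = −Id on ℤ^k and multiplication by m = 2 on each summand ℤ/pℤ). Consequently, ℤ_p wr ℤ^k does not have property R_∞ for any prime p > 3. -/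
/-! ### Auxiliary constructions -/

section Aux

variable (p k : ℕ)

/-- value of the shift action -/
lemma lampShift_apply (q : ℕ) (y : Multiplicative (Fin k → ℤ))
    (σ : Multiplicative (Lamp q k)) (x : Fin k → ℤ) :
    Multiplicative.toAdd (lampShift q k y σ) x =
      Multiplicative.toAdd σ (x - Multiplicative.toAdd y) := by
  simp [lampShift, Finsupp.domCongr_apply, Finsupp.equivMapDomain_apply, sub_eq_add_neg]

/-- smul by a nonzero scalar as an additive equivalence -/
noncomputable def lampSmulAdd [Fact p.Prime] (a : ZMod p) (ha : a ≠ 0) : Lamp p k ≃+ Lamp p k where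
  toFun σ := a • σ
  invFun σ := a⁻¹ • σ
  left_inv σ := by simp only []; rw [smul_smul, inv_mul_cancel₀ ha, one_smul]
  right_inv σ := by simp only []; rw [smul_smul, mul_inv_cancel₀ ha, one_smul]
  map_add' := smul_add a

/-- The additive map `σ ↦ a • (σ ∘ neg)` as an additive equivalence, for `a ≠ 0`. -/
noncomputable def lampFAdd [Fact p.Prime] (a : ZMod p) (ha : a ≠ 0) : Lamp p k ≃+ Lamp p k :=
  (lampSmulAdd p k a ha).trans (Finsupp.domCongr (Equiv.neg (Fin k → ℤ)))

lemma lampFAdd_apply [Fact p.Prime] (a : ZMod p) (ha : a ≠ 0) (σ : Lamp p k) (x : Fin k → ℤ) :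
    lampFAdd p k a ha σ x = a * σ (-x) := by
  simp [lampFAdd, lampSmulAdd, Finsupp.domCongr_apply, Finsupp.equivMapDomain_apply,
    Finsupp.smul_apply, smul_eq_mul]

/-- `F` as a `MulEquiv` on the multiplicative lamp group. -/
noncomputable def lampF [Fact p.Prime] (a : ZMod p) (ha : a ≠ 0) :
    Multiplicative (Lamp p k) ≃* Multiplicative (Lamp p k) :=
  AddEquiv.toMultiplicative (lampFAdd p k a ha)

/-- negation on the base -/
noncomputable def negBase : Multiplicative (Fin k → ℤ) ≃* Multiplicative (Fin k → ℤ) :=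
  AddEquiv.toMultiplicative (AddEquiv.neg (Fin k → ℤ))

end Aux


/-! ### The automorphism -/

section Phi

open SemidirectProduct Multiplicative

variable (p k : ℕ) [Fact p.Prime] (a : ZMod p) (ha : a ≠ 0)

lemma lampF_toAdd (σ : Multiplicative (Lamp p k)) :
    Multiplicative.toAdd (lampF p k a ha σ) = lampFAdd p k a ha (Multiplicative.toAdd σ) := rfl

lemma negBase_apply (y : Multiplicative (Fin k → ℤ)) : negBase k y = y⁻¹ := rfl

lemma phi_compat :
    ∀ g, ((SemidirectProduct.inl (φ := lampShift p k)).comp (lampF p k a ha).toMonoidHom).comp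
        ((lampShift p k g).toMonoidHom)
      = (MulAut.conj (((SemidirectProduct.inr (φ := lampShift p k)).comp
          (negBase k).toMonoidHom) g)).toMonoidHom.comp
        ((SemidirectProduct.inl (φ := lampShift p k)).comp (lampF p k a ha).toMonoidHom) := by
  intro g
  refine MonoidHom.ext fun σ => ?_
  have key : (lampF p k a ha) (((lampShift p k) g) σ)
      = ((lampShift p k) g⁻¹) ((lampF p k a ha) σ) := by
    refine Multiplicative.toAdd.injective ?_
    ext x
    simp only [lampF_toAdd, lampFAdd_apply, lampShift_apply, toAdd_inv]
    congr 2
    ring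
  simp only [MonoidHom.comp_apply, MulEquiv.coe_toMonoidHom, MulAut.conj_apply,
    negBase_apply, ← map_inv, ← inl_aut, key]

noncomputable def phiHom : Wreath p k →* Wreath p k :=
  SemidirectProduct.lift ((SemidirectProduct.inl (φ := lampShift p k)).comp
      (lampF p k a ha).toMonoidHom)
    ((SemidirectProduct.inr (φ := lampShift p k)).comp (negBase k).toMonoidHom)
    (phi_compat p k a ha)

lemma phiHom_inl (σ : Multiplicative (Lamp p k)) :
    phiHom p k a ha (SemidirectProduct.inl σ) = SemidirectProduct.inl (lampF p k a ha σ) := by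
  simp [phiHom]

lemma phiHom_inr (y : Multiplicative (Fin k → ℤ)) :
    phiHom p k a ha (SemidirectProduct.inr y) = SemidirectProduct.inr y⁻¹ := by
  simp [phiHom, negBase_apply]

lemma phiHom_comp (b : ZMod p) (hb : b ≠ 0) (hba : b * a = 1) :
    (phiHom p k b hb).comp (phiHom p k a ha) = MonoidHom.id _ := by
  apply SemidirectProduct.hom_ext
  · refine MonoidHom.ext fun σ => ?_
    simp only [MonoidHom.comp_apply, MonoidHom.id_apply, phiHom_inl]
    congr 1
    refine Multiplicative.toAdd.injective ?_
    ext x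
    rw [lampF_toAdd, lampFAdd_apply, lampF_toAdd, lampFAdd_apply, neg_neg,
      ← mul_assoc, hba, one_mul]
  · refine MonoidHom.ext fun y => ?_
    simp only [MonoidHom.comp_apply, MonoidHom.id_apply, phiHom_inr, inv_inv]

noncomputable def phi (b : ZMod p) (hb : b ≠ 0) (h1 : b * a = 1) (h2 : a * b = 1) :
    Wreath p k ≃* Wreath p k :=
  MonoidHom.toMulEquiv (phiHom p k a ha) (phiHom p k b hb)
    (phiHom_comp p k a ha b hb h1)
    (phiHom_comp p k b hb a ha h2)

lemma phi_apply (b : ZMod p) (hb : b ≠ 0) (h1 : b * a = 1) (h2 : a * b = 1) (g : Wreath p k) :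
    phi p k a ha b hb h1 h2 g = phiHom p k a ha g := rfl

end Phi

/-! ### Collapsing twisted conjugacy classes -/

section Collapse

open SemidirectProduct Multiplicative

variable (p k : ℕ) [Fact p.Prime] (a : ZMod p) (ha : a ≠ 0)
  (b : ZMod p) (hb : b ≠ 0) (h1 : b * a = 1) (h2 : a * b = 1)

/-- Within a fiber over `ℤ^k`, everything is twisted-conjugate to the base point. -/
lemma quot_fiber (haa : a * a - 1 ≠ 0) (g : Wreath p k) :
    Quot.mk (twistedConj (phi p k a ha b hb h1 h2)) g
      = Quot.mk (twistedConj (phi p k a ha b hb h1 h2)) (SemidirectProduct.inr g.right) := by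
  set φ := phi p k a ha b hb h1 h2 with hφ
  set σ₁ : Lamp p k := Multiplicative.toAdd g.left with hσ₁
  set y₀ : Fin k → ℤ := Multiplicative.toAdd g.right with hy₀
  set c : ZMod p := (a * a - 1)⁻¹ with hcdef
  have hc : c * (a * a - 1) = 1 := inv_mul_cancel₀ haa
  set e : Equiv.Perm (Fin k → ℤ) :=
    Function.Involutive.toPerm (fun x => y₀ - x) (fun x => by simp) with he
  set τ : Lamp p k := c • σ₁ + (c * a) • Finsupp.equivMapDomain e σ₁ with hτ
  have hτval : ∀ x, τ x = c * σ₁ x + (c * a) * σ₁ (y₀ - x) := by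
    intro x
    simp [hτ, Finsupp.equivMapDomain_apply, he, Function.Involutive.toPerm, smul_eq_mul]
  have key : SemidirectProduct.inl (Multiplicative.ofAdd τ) * g
      * (φ (SemidirectProduct.inl (Multiplicative.ofAdd τ)))⁻¹
      = SemidirectProduct.inr g.right := by
    rw [hφ, phi_apply, phiHom_inl, ← map_inv]
    refine SemidirectProduct.ext ?_ ?_
    · simp only [mul_left, mul_right, left_inl, right_inl, left_inr, right_inr, map_one,
        MulAut.one_apply, mul_one]
      refine Multiplicative.toAdd.injective ?_
      ext x
      simp only [toAdd_mul, Finsupp.add_apply, toAdd_one, Finsupp.zero_apply]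
      rw [lampShift_apply, toAdd_inv, lampF_toAdd]
      simp only [Finsupp.neg_apply, lampFAdd_apply, toAdd_ofAdd, neg_sub]
      simp only [one_mul, ← hσ₁, ← hy₀]
      rw [hτval, hτval]
      rw [show y₀ - (y₀ - x) = x by ring]
      linear_combination (-(σ₁ x)) * hc
    · simp only [mul_left, mul_right, left_inl, right_inl, left_inr, right_inr, one_mul, mul_one]
  calc Quot.mk (twistedConj φ) g
      = Quot.mk (twistedConj φ) (SemidirectProduct.inl (Multiplicative.ofAdd τ) * g
          * (φ (SemidirectProduct.inl (Multiplicative.ofAdd τ)))⁻¹) :=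
        Quot.sound ⟨SemidirectProduct.inl (Multiplicative.ofAdd τ), rfl⟩
    _ = _ := by rw [key]

/-- Over the base, every class reaches a representative with coordinates `0` or `1`. -/
lemma quot_base (y : Fin k → ℤ) :
    Quot.mk (twistedConj (phi p k a ha b hb h1 h2)) (SemidirectProduct.inr (Multiplicative.ofAdd y))
      = Quot.mk (twistedConj (phi p k a ha b hb h1 h2))
          (SemidirectProduct.inr (Multiplicative.ofAdd (fun i => y i % 2))) := by
  set φ := phi p k a ha b hb h1 h2 with hφ
  set z : Fin k → ℤ := fun i => -((y i - y i % 2) / 2) with hz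
  have key : SemidirectProduct.inr (Multiplicative.ofAdd z)
      * SemidirectProduct.inr (Multiplicative.ofAdd y)
      * (φ (SemidirectProduct.inr (Multiplicative.ofAdd z)))⁻¹
      = SemidirectProduct.inr (Multiplicative.ofAdd (fun i => y i % 2)) := by
    rw [hφ, phi_apply, phiHom_inr, ← map_inv, inv_inv, ← map_mul, ← map_mul]
    congr 1
    refine Multiplicative.toAdd.injective ?_
    funext i
    simp only [toAdd_mul, toAdd_ofAdd, Pi.add_apply]
    have hdvd : (2 : ℤ) ∣ y i - y i % 2 := Int.dvd_self_sub_of_emod_eq rfl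
    have h2 : 2 * ((y i - y i % 2) / 2) = y i - y i % 2 := Int.mul_ediv_cancel' hdvd
    simp only [hz]
    omega
  calc Quot.mk (twistedConj φ) (SemidirectProduct.inr (Multiplicative.ofAdd y))
      = Quot.mk (twistedConj φ) (SemidirectProduct.inr (Multiplicative.ofAdd z)
          * SemidirectProduct.inr (Multiplicative.ofAdd y)
          * (φ (SemidirectProduct.inr (Multiplicative.ofAdd z)))⁻¹) :=
        Quot.sound ⟨SemidirectProduct.inr (Multiplicative.ofAdd z), rfl⟩
    _ = _ := by rw [key]

end Collapse

/-- For a prime `p > 3`, the group `ℤ_p wr ℤ^k` has an automorphism with finite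
Reidemeister number; consequently it does not have property `R_∞`. -/
theorem stmt16 (p : ℕ) (hp : p.Prime) (hp3 : 3 < p) (k : ℕ) (hk : 1 ≤ k) :
    (∃ φ : Wreath p k ≃* Wreath p k, Finite (ReidemeisterClasses φ)) ∧
    ¬ (∀ φ : Wreath p k ≃* Wreath p k, Infinite (ReidemeisterClasses φ)) := by
  haveI : Fact p.Prime := ⟨hp⟩
  have h2 : (2 : ZMod p) ≠ 0 := by
    have h : ((2 : ℕ) : ZMod p) ≠ 0 := by
      rw [Ne, ZMod.natCast_eq_zero_iff]
      intro h
      have := Nat.le_of_dvd (by norm_num) h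
      omega
    simpa using h
  have h3 : (3 : ZMod p) ≠ 0 := by
    have h : ((3 : ℕ) : ZMod p) ≠ 0 := by
      rw [Ne, ZMod.natCast_eq_zero_iff]
      intro h
      have := Nat.le_of_dvd (by norm_num) h
      omega
    simpa using h
  have hb : ((2 : ZMod p))⁻¹ ≠ 0 := inv_ne_zero h2
  have hba : (2 : ZMod p)⁻¹ * 2 = 1 := inv_mul_cancel₀ h2
  have hab : (2 : ZMod p) * 2⁻¹ = 1 := mul_inv_cancel₀ h2
  have haa : (2 : ZMod p) * 2 - 1 ≠ 0 := by
    have : (2 : ZMod p) * 2 - 1 = 3 := by norm_num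
    rw [this]; exact h3
  set φ := phi p k 2 h2 2⁻¹ hb hba hab with hφ
  have hfin : Finite (ReidemeisterClasses φ) := by
    have hs : Function.Surjective (fun v : Fin k → Fin 2 =>
        Quot.mk (twistedConj φ)
          (SemidirectProduct.inr (Multiplicative.ofAdd (fun i => ((v i : ℕ) : ℤ))))) := by
      intro cq
      obtain ⟨g, rfl⟩ := Quot.exists_rep cq
      set y : Fin k → ℤ := Multiplicative.toAdd g.right with hy
      refine ⟨fun i => if y i % 2 = 0 then 0 else 1, ?_⟩
      have e1 := quot_fiber p k 2 h2 2⁻¹ hb hba hab haa g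
      have e2 := quot_base p k 2 h2 2⁻¹ hb hba hab y
      rw [hφ]
      refine (congrArg (fun f : Fin k → ℤ =>
          Quot.mk (twistedConj (phi p k 2 h2 2⁻¹ hb hba hab))
            (SemidirectProduct.inr (Multiplicative.ofAdd f)))
          (funext fun i => ?_)).trans (e2.symm.trans ?_)
      · have : y i % 2 = 0 ∨ y i % 2 = 1 := by omega
        rcases this with h | h <;> simp [h]
      · rw [hy, ofAdd_toAdd]
        exact e1.symm
    exact Finite.of_surjective _ hs
  refine ⟨⟨φ, hfin⟩, fun H => ?_⟩
  haveI := H φ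
  exact not_finite (ReidemeisterClasses φ)
end
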